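/- arXiv:2311.00075 — 6 statements merged into one kernel-verified Lean document; each statement's English description precedes it below -/
import Mathlib

section
/- Let d ≥ 2 and n ≥ d+1 with (n − d) dividing n, and set r = n/(n − d). For every graph G on n vertices with maximum degree at most d, the number of nonempty connected vertex subsets satisfies N(G) ≤ 2^n − r·2^{n−d} + n + r − 1. -/
open SimpleGraph

/-- The number of (nonempty) vertex subsets of `G` inducing a connected subgraph. -/
noncomputable def numConnSets {V : Type*} (G : SimpleGraph V) : ℕ :=
  Nat.card {s : Finset V // (G.induce (s : Set V)).Connected}

open Finset in
lemma aux_not_conn {V : Type*} (G : SimpleGraph V) (s : Finset V) (v w : V)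
    (hv : v ∈ s) (hw : w ∈ s) (hwv : w ≠ v)
    (hiso : ∀ u ∈ s, ¬ G.Adj v u) : ¬ (G.induce (s : Set V)).Connected := by
  intro hc
  obtain ⟨p⟩ := hc.preconnected ⟨v, hv⟩ ⟨w, hw⟩
  by_cases hnil : p.Nil
  · exact hwv (congrArg Subtype.val hnil.eq).symm
  · obtain ⟨u, hadj, q, _⟩ := SimpleGraph.Walk.not_nil_iff.mp hnil
    have : G.Adj v u.val := by simpa using hadj
    exact hiso u.val u.2 this

open Finset in
theorem stmt6 {V : Type*} [Fintype V] (d n : ℕ) (hd : 2 ≤ d) (hn : d + 1 ≤ n)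
    (hdvd : (n - d) ∣ n) (G : SimpleGraph V) [DecidableRel G.Adj]
    (hcard : Fintype.card V = n) (hdeg : ∀ v, G.degree v ≤ d) :
    numConnSets G ≤ 2 ^ n - (n / (n - d)) * 2 ^ (n - d) + n + n / (n - d) - 1 := by
  classical
  set m := n - d with hm
  have hm1 : 1 ≤ m := by omega
  set r := n / m with hr
  have hrm : r * m = n := Nat.div_mul_cancel hdvd
  have hr1 : 1 ≤ r := Nat.div_pos (by omega) (by omega)
  -- the finset of non-connected subsets
  set A : Finset (Finset V) :=
    univ.filter (fun s => ¬ (G.induce (s : Set V)).Connected) with hA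
  have hNA : numConnSets G + A.card = 2 ^ n := by
    have h1 : numConnSets G =
        (univ.filter (fun s : Finset V => (G.induce (s : Set V)).Connected)).card := by
      rw [numConnSets, Nat.card_eq_fintype_card, Fintype.card_subtype]
    rw [h1, hA, Finset.card_filter_add_card_filter_not, Finset.card_univ,
      Fintype.card_finset, hcard]
  -- per-cardinality bound via double counting
  have key : ∀ k ∈ Icc 2 m,
      r * Nat.choose m k ≤ (A.filter (fun s => s.card = k)).card := by
    intro k hk
    obtain ⟨hk2, hkm⟩ := mem_Icc.mp hk
    set Ak := A.filter (fun s => s.card = k) with hAk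
    have hdc := Finset.card_mul_le_card_mul
      (r := fun (v : V) (s : Finset V) => v ∈ s ∧ ∀ w ∈ s, ¬ G.Adj v w)
      (s := (univ : Finset V)) (t := Ak)
      (m := Nat.choose (m - 1) (k - 1)) (n := k)
      ?lower ?upper
    · -- conclude from the double count
      have hucard : (univ : Finset V).card = n := by simp [hcard]
      rw [hucard] at hdc
      -- n * C(m-1,k-1) = r * C(m,k) * k
      have hid : m * Nat.choose (m - 1) (k - 1) = Nat.choose m k * k := by
        have := Nat.add_one_mul_choose_eq (m - 1) (k - 1)
        have h1 : m - 1 + 1 = m := by omega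
        have h2 : k - 1 + 1 = k := by omega
        rwa [h1, h2] at this
      have hmain : r * Nat.choose m k * k ≤ Ak.card * k := by
        calc r * Nat.choose m k * k = r * (Nat.choose m k * k) := by ring
          _ = r * (m * Nat.choose (m - 1) (k - 1)) := by rw [hid]
          _ = (r * m) * Nat.choose (m - 1) (k - 1) := by ring
          _ = n * Nat.choose (m - 1) (k - 1) := by rw [hrm]
          _ ≤ Ak.card * k := hdc
      exact Nat.le_of_mul_le_mul_right hmain (by omega)
    case lower =>
      intro v _
      set N : Finset V := univ.filter (fun w => ¬ G.Adj v w ∧ w ≠ v) with hN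
      have hvN : v ∉ N := by simp [hN]
      have hNcard : m - 1 ≤ N.card := by
        have hsub : univ.filter (fun w => ¬(¬ G.Adj v w ∧ w ≠ v)) ⊆
            insert v (G.neighborFinset v) := by
          intro w hw
          simp only [mem_filter, mem_univ, true_and, not_and, not_not, ne_eq] at hw
          simp only [mem_insert, mem_neighborFinset]
          tauto
        have h1 : (univ.filter (fun w => ¬(¬ G.Adj v w ∧ w ≠ v))).card ≤ d + 1 := by
          calc (univ.filter (fun w => ¬(¬ G.Adj v w ∧ w ≠ v))).card
              ≤ (insert v (G.neighborFinset v)).card := Finset.card_le_card hsub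
            _ ≤ (G.neighborFinset v).card + 1 := Finset.card_insert_le _ _
            _ = G.degree v + 1 := by rw [G.card_neighborFinset_eq_degree]
            _ ≤ d + 1 := by have := hdeg v; omega
        have h2 := Finset.card_filter_add_card_filter_not
          (s := (univ : Finset V)) (p := fun w => ¬ G.Adj v w ∧ w ≠ v)
        rw [Finset.card_univ, hcard, ← hN] at h2
        omega
      calc Nat.choose (m - 1) (k - 1) ≤ Nat.choose N.card (k - 1) :=
            Nat.choose_le_choose _ hNcard
        _ = (N.powersetCard (k - 1)).card := (Finset.card_powersetCard _ _).symm
        _ ≤ (Ak.bipartiteAbove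
              (fun (v : V) (s : Finset V) => v ∈ s ∧ ∀ w ∈ s, ¬ G.Adj v w) v).card := by
          apply Finset.card_le_card_of_injOn (fun t => insert v t)
          · intro t ht
            obtain ⟨htN, htc⟩ := Finset.mem_powersetCard.mp ht
            have hvt : v ∉ t := fun h => hvN (htN h)
            have hcardins : (insert v t).card = k := by
              rw [Finset.card_insert_of_notMem hvt, htc]; omega
            have hiso : ∀ w ∈ insert v t, ¬ G.Adj v w := by
              intro w hw
              rcases Finset.mem_insert.mp hw with h | h
              · rw [h]; exact G.loopless.irrefl v
              · exact ((mem_filter.mp (htN h)).2).1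
            have htne : t.Nonempty := by
              rw [← Finset.card_pos, htc]; omega
            obtain ⟨w, hwt⟩ := htne
            have hwv : w ≠ v := fun h => hvt (h ▸ hwt)
            have hnc : ¬ (G.induce ((insert v t : Finset V) : Set V)).Connected :=
              aux_not_conn G _ v w (Finset.mem_insert_self v t)
                (Finset.mem_insert_of_mem hwt) hwv hiso
            rw [Finset.mem_coe, Finset.mem_bipartiteAbove]
            refine ⟨?_, Finset.mem_insert_self v t, hiso⟩
            rw [hAk, mem_filter, hA, mem_filter]
            exact ⟨⟨mem_univ _, hnc⟩, hcardins⟩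
          · intro t1 h1 t2 h2 heq
            have hv1 : v ∉ t1 := fun h => hvN ((Finset.mem_powersetCard.mp h1).1 h)
            have hv2 : v ∉ t2 := fun h => hvN ((Finset.mem_powersetCard.mp h2).1 h)
            have h3 := congrArg (fun s : Finset V => s.erase v) heq
            simpa [Finset.erase_insert hv1, Finset.erase_insert hv2] using h3
    case upper =>
      intro s hs
      have hsk : s.card = k := (mem_filter.mp hs).2
      calc (Finset.bipartiteBelow
            (fun (v : V) (s : Finset V) => v ∈ s ∧ ∀ w ∈ s, ¬ G.Adj v w) univ s).card
          ≤ s.card := by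
            apply Finset.card_le_card
            intro v hv
            exact (((Finset.mem_bipartiteBelow _).mp hv).2).1
        _ = k := hsk
  -- sum up over k ∈ Icc 2 m
  set A' : Finset (Finset V) := A.filter (fun s => s.card ∈ Icc 2 m) with hA'
  have hA'card : A'.card = ∑ k ∈ Icc 2 m, (A'.filter (fun s => s.card = k)).card :=
    Finset.card_eq_sum_card_fiberwise (fun s hs => (mem_filter.mp hs).2)
  have hfib : ∀ k ∈ Icc 2 m,
      A.filter (fun s => s.card = k) = A'.filter (fun s => s.card = k) := by
    intro k hk
    ext s
    simp only [hA', mem_filter, and_assoc]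
    constructor
    · rintro ⟨h1, h2⟩; exact ⟨h1, h2 ▸ hk, h2⟩
    · rintro ⟨h1, _, h3⟩; exact ⟨h1, h3⟩
  have hsum : ∑ k ∈ Icc 2 m, r * Nat.choose m k ≤ A'.card := by
    rw [hA'card]
    apply Finset.sum_le_sum
    intro k hk
    rw [← hfib k hk]
    exact key k hk
  have hchoose : ∑ k ∈ Icc 2 m, Nat.choose m k = 2 ^ m - (m + 1) := by
    have h0 : ∑ k ∈ Finset.range (m + 1), Nat.choose m k = 2 ^ m := Nat.sum_range_choose m
    have h2 : ∑ k ∈ Finset.Ico 0 2, Nat.choose m k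
        + ∑ k ∈ Finset.Ico 2 (m + 1), Nat.choose m k
        = ∑ k ∈ Finset.Ico 0 (m + 1), Nat.choose m k :=
      Finset.sum_Ico_consecutive _ (by omega) (by omega)
    have h3 : ∑ k ∈ Finset.Ico 0 2, Nat.choose m k = 1 + m := by
      rw [show (Finset.Ico 0 2) = Finset.range 2 from by rw [Finset.range_eq_Ico],
        Finset.sum_range_succ, Finset.sum_range_succ]
      simp
    have h4 : Finset.Ico 2 (m + 1) = Finset.Icc 2 m := by rw [Finset.Ico_add_one_right_eq_Icc]
    have h5 : Finset.Ico 0 (m + 1) = Finset.range (m + 1) := by rw [Finset.range_eq_Ico]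
    rw [h4, h5, h0, h3] at h2
    have hml : m + 1 ≤ 2 ^ m := by
      have := Nat.lt_two_pow_self (n := m)
      have h2m : 2 ≤ 2 ^ m := by
        calc 2 = 2 ^ 1 := rfl
          _ ≤ 2 ^ m := Nat.pow_le_pow_right (by norm_num) hm1
      omega
    omega
  have hAsum : r * (2 ^ m - (m + 1)) ≤ A'.card := by
    calc r * (2 ^ m - (m + 1)) = r * ∑ k ∈ Icc 2 m, Nat.choose m k := by rw [hchoose]
      _ = ∑ k ∈ Icc 2 m, r * Nat.choose m k := Finset.mul_sum _ _ _
      _ ≤ A'.card := hsum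
  -- the empty set is also non-connected
  have hempty : (∅ : Finset V) ∈ A := by
    rw [hA, mem_filter]
    refine ⟨mem_univ _, fun hc => ?_⟩
    obtain ⟨⟨x, hx⟩⟩ := hc.nonempty
    simp at hx
  have hemptyA' : (∅ : Finset V) ∉ A' := by
    rw [hA', mem_filter]
    simp
  have hAcard : A'.card + 1 ≤ A.card := by
    have hsub : insert ∅ A' ⊆ A := by
      intro s hs
      rcases Finset.mem_insert.mp hs with h | h
      · exact h ▸ hempty
      · exact (mem_filter.mp h).1
    have := Finset.card_le_card hsub
    rwa [Finset.card_insert_of_notMem hemptyA'] at this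
  -- final arithmetic
  have hbig : r * (2 ^ m - (m + 1)) + 1 ≤ A.card := by omega
  have hml : m + 1 ≤ 2 ^ m := by
    have h2m : 2 ≤ 2 ^ m := by
      calc 2 = 2 ^ 1 := rfl
        _ ≤ 2 ^ m := Nat.pow_le_pow_right (by norm_num) hm1
    have := Nat.lt_two_pow_self (n := m)
    omega
  have hx : r * (2 ^ m - (m + 1)) + n + r = r * 2 ^ m := by
    have : r * (2 ^ m - (m + 1)) + r * (m + 1) = r * 2 ^ m := by
      rw [← Nat.mul_add, Nat.sub_add_cancel hml]
    have hr2 : r * (m + 1) = n + r := by rw [Nat.mul_add, hrm]; ring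
    omega
  omega
end

section
/- Let d ≥ 2 and n ≥ d+1 with (n − d) dividing n, and set r = n/(n − d). The complete balanced r-partite graph with parts of size n − d (which is d-regular of order n) attains N(G) = 2^n − r·2^{n−d} + n + r − 1, i.e., equality in the upper bound on the number of nonempty connected vertex subsets among graphs with maximum degree at most d. -/
open SimpleGraph

namespace Stmt7Aux

abbrev Vrm (r m : ℕ) := (_i : Fin r) × Fin m

def Qpred (r m : ℕ) (s : Finset (Vrm r m)) : Prop :=
  s.card = 1 ∨ ∃ a ∈ s, ∃ b ∈ s, a.1 ≠ b.1

lemma conn_iff (r m : ℕ) (s : Finset (Vrm r m)) :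
    ((completeMultipartiteGraph (fun _ : Fin r => Fin m)).induce (s : Set (Vrm r m))).Connected
      ↔ Qpred r m s := by
  constructor
  · intro h
    by_cases hex : ∃ a ∈ s, ∃ b ∈ s, a.1 ≠ b.1
    · exact Or.inr hex
    · push_neg at hex
      left
      obtain ⟨⟨x, hx⟩⟩ := h.nonempty
      rw [Finset.mem_coe] at hx
      refine Finset.card_eq_one.mpr ⟨x, ?_⟩
      ext y
      simp only [Finset.mem_singleton]
      constructor
      · intro hy
        obtain ⟨w⟩ := h.preconnected ⟨y, Finset.mem_coe.mpr hy⟩ ⟨x, Finset.mem_coe.mpr hx⟩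
        cases w with
        | nil => rfl
        | cons hadj _ =>
          exfalso
          rename_i v _
          have : y.1 ≠ (v : Vrm r m).1 := by
            simpa [completeMultipartiteGraph] using hadj
          exact this (hex y hy (v : Vrm r m) (Finset.mem_coe.mp v.2))
      · rintro rfl; exact hx
  · rintro (h1 | ⟨a, ha, b, hb, hab⟩)
    · obtain ⟨x, rfl⟩ := Finset.card_eq_one.mp h1
      rw [connected_iff]
      refine ⟨?_, ⟨⟨x, by simp⟩⟩⟩
      intro u v
      have : u = v := by
        apply Subtype.ext
        have hu := u.2; have hv := v.2
        simp only [Finset.coe_singleton, Set.mem_singleton_iff] at hu hv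
        rw [hu, hv]
      exact this ▸ Reachable.refl u
    · rw [connected_iff]
      refine ⟨?_, ⟨⟨a, Finset.mem_coe.mpr ha⟩⟩⟩
      intro u v
      by_cases h : (u : Vrm r m).1 = (v : Vrm r m).1
      · have hc : ∃ c ∈ s, c.1 ≠ (u : Vrm r m).1 := by
          by_cases hau : a.1 = (u : Vrm r m).1
          · exact ⟨b, hb, fun hbu => hab (hau.trans hbu.symm)⟩
          · exact ⟨a, ha, hau⟩
        obtain ⟨c, hc1, hc2⟩ := hc
        have h1 : ((completeMultipartiteGraph (fun _ : Fin r => Fin m)).induce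
            (s : Set (Vrm r m))).Adj u ⟨c, Finset.mem_coe.mpr hc1⟩ := by
          simp [completeMultipartiteGraph]
          exact fun hh => hc2 hh.symm
        have h2 : ((completeMultipartiteGraph (fun _ : Fin r => Fin m)).induce
            (s : Set (Vrm r m))).Adj (⟨c, Finset.mem_coe.mpr hc1⟩ : (s : Set (Vrm r m))) v := by
          simp [completeMultipartiteGraph]
          exact fun hh => hc2 (hh.trans h.symm)
        exact h1.reachable.trans h2.reachable
      · have h1 : ((completeMultipartiteGraph (fun _ : Fin r => Fin m)).induce
            (s : Set (Vrm r m))).Adj u v := by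
          simp [completeMultipartiteGraph]; exact h
        exact h1.reachable

def embV (r m : ℕ) (i : Fin r) : Fin m ↪ Vrm r m :=
  ⟨fun a => ⟨i, a⟩, fun a b h => by simpa using h⟩

open Classical in
lemma small_count (m : ℕ) :
    ((Finset.univ : Finset (Finset (Fin m))).filter fun t => 2 ≤ t.card).card
      = 2 ^ m - (m + 1) := by
  classical
  have htot := Finset.card_filter_add_card_filter_not
    (s := (Finset.univ : Finset (Finset (Fin m)))) (p := fun t => 2 ≤ t.card)
  have htot' : (Finset.univ : Finset (Finset (Fin m))).card = 2 ^ m := by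
    simp [Finset.card_univ, Fintype.card_finset]
  have hneg : ((Finset.univ : Finset (Finset (Fin m))).filter fun t => ¬ 2 ≤ t.card).card
      = m + 1 := by
    have heq : ((Finset.univ : Finset (Finset (Fin m))).filter fun t => ¬ 2 ≤ t.card)
        = insert ∅ (Finset.univ.image fun a : Fin m => ({a} : Finset (Fin m))) := by
      ext t
      simp only [Finset.mem_filter, Finset.mem_univ, true_and, Finset.mem_insert,
        Finset.mem_image]
      constructor
      · intro ht
        interval_cases h : t.card
        · exact Or.inl (Finset.card_eq_zero.mp h)
        · obtain ⟨a, rfl⟩ := Finset.card_eq_one.mp h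
          exact Or.inr ⟨a, rfl⟩
      · rintro (rfl | ⟨a, _, rfl⟩) <;> simp
    rw [heq, Finset.card_insert_of_notMem (by simp), Finset.card_image_of_injective _
      Finset.singleton_injective]
    simp [Nat.add_comm]
  omega

open Classical in
lemma bad_count (r m : ℕ) :
    ((Finset.univ : Finset (Finset (Vrm r m))).filter
        fun s => s ≠ ∅ ∧ ¬ Qpred r m s).card
      = ((Finset.univ : Finset (Fin r × Finset (Fin m))).filter
        fun p => 2 ≤ p.2.card).card := by
  classical
  refine (Finset.card_bij (fun p _ => p.2.map (embV r m p.1)) ?_ ?_ ?_).symm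
  · -- maps into
    rintro ⟨i, t⟩ hp
    simp only [Finset.mem_filter, Finset.mem_univ, true_and] at hp ⊢
    have hmem : ∀ x ∈ t.map (embV r m i), x.1 = i := by
      intro x hx
      obtain ⟨a, _, rfl⟩ := Finset.mem_map.mp hx
      rfl
    constructor
    · intro he
      have : (t.map (embV r m i)).card = 0 := by rw [he]; simp
      rw [Finset.card_map] at this; omega
    · rintro (h1 | ⟨a, ha, b, hb, hab⟩)
      · rw [Finset.card_map] at h1; omega
      · exact hab ((hmem a ha).trans (hmem b hb).symm)
  · -- injective
    rintro ⟨i, t⟩ hp ⟨j, u⟩ hq heq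
    simp only [Finset.mem_filter, Finset.mem_univ, true_and] at hp hq
    dsimp only at heq
    have ht : t.Nonempty := Finset.card_pos.mp (by omega)
    obtain ⟨a, ha⟩ := ht
    have hmem : (⟨i, a⟩ : Vrm r m) ∈ u.map (embV r m j) := by
      rw [← heq]; exact Finset.mem_map_of_mem _ ha
    obtain ⟨b, _, hb⟩ := Finset.mem_map.mp hmem
    have hij : j = i := congrArg Sigma.fst hb
    subst hij
    have : t = u := Finset.map_injective (embV r m j) heq
    rw [this]
  · -- surjective
    intro s hs
    simp only [Finset.mem_filter, Finset.mem_univ, true_and] at hs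
    obtain ⟨hne, hQ⟩ := hs
    rw [Qpred] at hQ
    push_neg at hQ
    obtain ⟨hcard, hsame⟩ := hQ
    obtain ⟨x, hx⟩ := Finset.nonempty_iff_ne_empty.mpr hne
    refine ⟨⟨x.1, s.image fun v => v.2⟩, ?_, ?_⟩
    · simp only [Finset.mem_filter, Finset.mem_univ, true_and]
      have hinj : Set.InjOn (fun v : Vrm r m => v.2) s := by
        intro a ha b hb hab
        have : a.1 = b.1 := hsame a ha b hb
        exact Sigma.ext this (by simpa using hab)
      rw [Finset.card_image_of_injOn hinj]
      have : s.card ≠ 0 := by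
        simpa [Finset.card_eq_zero] using hne
      omega
    · ext y
      simp only [Finset.mem_map, Finset.mem_image]
      constructor
      · rintro ⟨a, ⟨v, hv, rfl⟩, rfl⟩
        have : (embV r m x.1) v.2 = v := Sigma.ext (hsame x hx v hv) (by rfl)
        rw [this]; exact hv
      · intro hy
        refine ⟨y.2, ⟨y, hy, rfl⟩, ?_⟩
        exact Sigma.ext (hsame x hx y hy) HEq.rfl

open Classical in
lemma good_count (r m : ℕ) :
    ((Finset.univ : Finset (Finset (Vrm r m))).filter fun s => Qpred r m s).card
      = 2 ^ (r * m) - (1 + r * (2 ^ m - (m + 1))) := by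
  classical
  have htot := Finset.card_filter_add_card_filter_not
    (s := (Finset.univ : Finset (Finset (Vrm r m)))) (p := fun s => Qpred r m s)
  have hcardV : Fintype.card (Vrm r m) = r * m := by
    simp [Fintype.card_sigma, Finset.sum_const, mul_comm]
  have htot' : (Finset.univ : Finset (Finset (Vrm r m))).card = 2 ^ (r * m) := by
    simp [Finset.card_univ, Fintype.card_finset, hcardV]
  -- the negative filter
  have hnegeq : ((Finset.univ : Finset (Finset (Vrm r m))).filter fun s => ¬ Qpred r m s)
      = insert ∅ ((Finset.univ : Finset (Finset (Vrm r m))).filter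
        fun s => s ≠ ∅ ∧ ¬ Qpred r m s) := by
    ext s
    simp only [Finset.mem_filter, Finset.mem_univ, true_and, Finset.mem_insert]
    constructor
    · intro hs
      by_cases he : s = ∅
      · exact Or.inl he
      · exact Or.inr ⟨he, hs⟩
    · rintro (rfl | ⟨_, hs⟩)
      · rw [Qpred]; push_neg
        exact ⟨by simp, by simp⟩
      · exact hs
  have hbadpairs : ((Finset.univ : Finset (Fin r × Finset (Fin m))).filter
        fun p => 2 ≤ p.2.card)
      = (Finset.univ : Finset (Fin r)) ×ˢ
        ((Finset.univ : Finset (Finset (Fin m))).filter fun t => 2 ≤ t.card) := by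
    ext p
    simp [Finset.mem_product]
  have hneg : ((Finset.univ : Finset (Finset (Vrm r m))).filter fun s => ¬ Qpred r m s).card
      = 1 + r * (2 ^ m - (m + 1)) := by
    rw [hnegeq, Finset.card_insert_of_notMem (by simp), bad_count, hbadpairs,
      Finset.card_product, small_count]
    simp [Nat.add_comm, Finset.card_univ]
  rw [hneg] at htot
  omega

lemma pow_ineq (r m : ℕ) (hr : 2 ≤ r) (hm : 1 ≤ m) : r * 2 ^ m ≤ 2 ^ (r * m) := by
  have h1 : r ≤ 2 ^ (r - 1) := by
    have := Nat.lt_two_pow_self (n := r - 1)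
    omega
  have h2 : r - 1 + m ≤ r * m := by
    obtain ⟨r', rfl⟩ : ∃ r', r = r' + 2 := ⟨r - 2, by omega⟩
    obtain ⟨m', rfl⟩ : ∃ m', m = m' + 1 := ⟨m - 1, by omega⟩
    have : (r' + 2) * (m' + 1) = r' * m' + r' + 2 * m' + 2 := by ring
    omega
  calc r * 2 ^ m ≤ 2 ^ (r - 1) * 2 ^ m := Nat.mul_le_mul_right _ h1
    _ = 2 ^ (r - 1 + m) := (pow_add 2 _ _).symm
    _ ≤ 2 ^ (r * m) := Nat.pow_le_pow_right (by norm_num) h2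

end Stmt7Aux

open Stmt7Aux in
theorem stmt7 (d n : ℕ) (hd : 2 ≤ d) (hn : d + 1 ≤ n) (hdvd : (n - d) ∣ n) :
    numConnSets (completeMultipartiteGraph (fun _ : Fin (n / (n - d)) => Fin (n - d))) =
      2 ^ n - (n / (n - d)) * 2 ^ (n - d) + n + n / (n - d) - 1 := by
  classical
  set m := n - d with hmdef
  set r := n / (n - d) with hrdef
  have hm : 1 ≤ m := by omega
  have hrm : r * m = n := Nat.div_mul_cancel hdvd
  have hr : 2 ≤ r := by
    by_contra hcon
    push_neg at hcon
    interval_cases r <;> omega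
  have hcount : numConnSets
      (completeMultipartiteGraph (fun _ : Fin r => Fin m))
      = ((Finset.univ : Finset (Finset (Vrm r m))).filter fun s => Qpred r m s).card := by
    rw [numConnSets, Nat.card_eq_fintype_card]
    rw [Fintype.card_subtype]
    congr 1
    apply Finset.filter_congr
    intro s _
    exact conn_iff r m s
  rw [hcount, good_count]
  have hA : r * 2 ^ m ≤ 2 ^ n := by
    rw [← hrm]; exact pow_ineq r m hr hm
  have hY : r * (m + 1) = n + r := by
    rw [Nat.mul_add, Nat.mul_one, hrm]
  have hYX : r * (m + 1) ≤ r * 2 ^ m :=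
    Nat.mul_le_mul_left _ (Nat.lt_two_pow_self (n := m))
  have hZ : r * (2 ^ m - (m + 1)) = r * 2 ^ m - (n + r) := by
    rw [Nat.mul_sub_left_distrib, hY]
  rw [hY] at hYX
  rw [hrm, hZ]
  set X := r * 2 ^ m with hXdef
  omega
end

section
/- Let d ≥ 2 and n ≥ d+2 with (n − d) dividing n, and set r = n/(n − d). For every graph G on n vertices with maximum degree at most d, the number of connected dominating sets satisfies N_dom(G) ≤ 2^n − r·2^{n−d} + r − 1, with equality for the balanced complete r-partite graph. -/
open SimpleGraph

/-- The number of connected dominating vertex subsets of `G`. -/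
noncomputable def numConnDomSets {V : Type*} (G : SimpleGraph V) : ℕ :=
  Nat.card {s : Finset V // (G.induce (s : Set V)).Connected ∧
    ∀ v, v ∉ s → ∃ u ∈ s, G.Adj u v}

open Finset

lemma sum_powerset_inv_card {α : Type*} [DecidableEq α] (B : Finset α) :
    ∑ t ∈ B.powerset, (1:ℚ)/((#t:ℚ)+1) = (2^(#B+1) - 1)/((#B:ℚ)+1) := by
  rw [powerset_card_disjiUnion]; erw [sum_disjiUnion]
  have h1 : ∀ j ∈ Finset.range (#B+1), ∑ t ∈ powersetCard j B, (1:ℚ)/((#t:ℚ)+1)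
      = ((#B).choose j : ℚ) * (1/((j:ℚ)+1)) := by
    intro j hj
    rw [sum_congr rfl (fun t ht => by rw [(mem_powersetCard.mp ht).2]), sum_const,
      card_powersetCard, nsmul_eq_mul]
  rw [sum_congr rfl h1]
  set m := #B with hm
  rw [eq_div_iff (by positivity : ((m:ℚ)+1) ≠ 0), sum_mul]
  have hterm : ∀ j ∈ Finset.range (m+1),
      ((m.choose j : ℚ) * (1/((j:ℚ)+1))) * ((m:ℚ)+1) = ((m+1).choose (j+1) : ℚ) := by
    intro j hj
    have h := Nat.add_one_mul_choose_eq m j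
    have h2 : ((m:ℚ)+1) * (m.choose j : ℚ) = ((m+1).choose (j+1) : ℚ) * ((j:ℚ)+1) := by
      exact_mod_cast h
    have hj1 : ((j:ℚ)+1) ≠ 0 := by positivity
    field_simp
    linarith
  rw [sum_congr rfl hterm]
  have hN : ∑ j ∈ Finset.range (m+1), (m+1).choose (j+1) + 1 = 2^(m+1) := by
    have h := Nat.sum_range_choose (m+1)
    rw [Finset.sum_range_succ'] at h
    simpa using h
  have hQ : ((∑ j ∈ Finset.range (m+1), (m+1).choose (j+1) : ℕ) : ℚ) + 1 = 2^(m+1) := by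
    exact_mod_cast congrArg (fun x : ℕ => (x : ℚ)) hN
  push_cast at hQ ⊢
  linarith

lemma not_conn_of_isolated {V : Type} (G : SimpleGraph V) (s : Finset V) (v u : V)
    (hv : v ∈ s) (hu : u ∈ s) (hne : u ≠ v) (hiso : ∀ w ∈ s, ¬ G.Adj v w) :
    ¬ (G.induce (s : Set V)).Connected := by
  intro h
  obtain ⟨w⟩ := h.preconnected ⟨v, by simpa using hv⟩ ⟨u, by simpa using hu⟩
  cases w with
  | nil => exact hne rfl
  | @cons _ b _ h' p =>
    have hb : (b : V) ∈ s := by simpa using b.2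
    exact hiso _ hb (by simpa [induce] using h')

lemma not_connDom {V : Type} (G : SimpleGraph V) (v : V) (s : Finset V)
    (hsub : ∀ u ∈ s, ¬ G.Adj v u) (hv2 : ∃ u, u ≠ v ∧ ¬ G.Adj v u) :
    ¬((G.induce (s:Set V)).Connected ∧ ∀ w ∉ s, ∃ u ∈ s, G.Adj u w) := by
  rintro ⟨hconn, hdom⟩
  by_cases hvs : v ∈ s
  · by_cases hex : ∃ u ∈ s, u ≠ v
    · obtain ⟨u, hu, hune⟩ := hex
      exact not_conn_of_isolated G s v u hvs hu hune hsub hconn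
    · push_neg at hex
      obtain ⟨u, hune, hnadj⟩ := hv2
      have hus : u ∉ s := fun h => hune (hex u h)
      obtain ⟨w, hw, hadj⟩ := hdom u hus
      have hwv : w = v := hex w hw
      exact hnadj (hwv ▸ hadj)
  · obtain ⟨w, hw, hadj⟩ := hdom v hvs
    exact hsub w hw hadj.symm

lemma numConnDomSets_eq {V : Type} [Fintype V] (G : SimpleGraph V)
    (p : Finset V → Prop) [DecidablePred p]
    (hp : ∀ s, p s ↔ ((G.induce (s:Set V)).Connected ∧ ∀ v ∉ s, ∃ u ∈ s, G.Adj u v)) :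
    numConnDomSets G = #(univ.filter p) := by
  classical
  rw [numConnDomSets, Nat.card_congr (Equiv.subtypeEquivRight (fun s => (hp s).symm)),
    Nat.card_eq_fintype_card, Fintype.card_subtype]

lemma D_lb {V : Type} [Fintype V] [DecidableEq V] (G : SimpleGraph V) [DecidableRel G.Adj] (k r : ℕ)
    (hk : 2 ≤ k) (hcard : Fintype.card V = r * k)
    (hdeg : ∀ v : V, G.degree v + k ≤ Fintype.card V) :
    r * (2^k - 1) ≤ #(univ.filter (fun s : Finset V =>
      s.Nonempty ∧ ∃ v : V, ∀ u ∈ s, ¬ G.Adj v u)) := by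
  classical
  set A : V → Finset V := fun v => univ.filter fun u => ¬ G.Adj v u with hA
  have hAv : ∀ v, v ∈ A v := fun v => by simp [hA]
  have hAcard : ∀ v : V, k ≤ #(A v) := by
    intro v
    have h1 : #(univ.filter (G.Adj v)) + #(univ.filter (fun u => ¬ G.Adj v u))
        = Fintype.card V := by
      rw [card_filter_add_card_filter_not, card_univ]
    have h2 : #(univ.filter (G.Adj v)) = G.degree v := by
      rw [degree]; congr 1; ext u; simp [mem_neighborFinset]
    have h3 := hdeg v
    simp only [hA]; omega
  set D := univ.filter (fun s : Finset V =>
      s.Nonempty ∧ ∃ v : V, ∀ u ∈ s, ¬ G.Adj v u) with hD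
  set c : Finset V → Finset V := fun s => s.filter (fun v => s ⊆ A v) with hc
  have hcsub : ∀ s, c s ⊆ s := fun s => filter_subset _ _
  have hk0 : (0:ℚ) < (k:ℚ) := by exact_mod_cast (by omega : 0 < k)
  have h1 : ∀ v : V, ((2:ℚ)^k - 1)/(k:ℚ)
      ≤ ∑ s ∈ D.filter (fun s => v ∈ c s), (1:ℚ)/(#(c s):ℚ) := by
    intro v
    have hek : k - 1 ≤ #((A v).erase v) := by
      rw [card_erase_of_mem (hAv v)]; have := hAcard v; omega
    obtain ⟨B, hBsub, hBcard⟩ := Finset.exists_subset_card_eq hek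
    have hvB : v ∉ B := fun h => notMem_erase v _ (hBsub h)
    have hBA : B ⊆ A v := hBsub.trans (erase_subset _ _)
    have hins : ∀ t ∈ B.powerset, insert v t ⊆ A v := by
      intro t ht; exact insert_subset (hAv v) ((mem_powerset.mp ht).trans hBA)
    have hcmem : ∀ t ∈ B.powerset, v ∈ c (insert v t) := by
      intro t ht; simp only [hc, mem_filter]
      exact ⟨mem_insert_self _ _, hins t ht⟩
    have hmemD : ∀ t ∈ B.powerset, insert v t ∈ D.filter (fun s => v ∈ c s) := by
      intro t ht
      rw [mem_filter]
      refine ⟨?_, hcmem t ht⟩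
      rw [hD, mem_filter]
      refine ⟨mem_univ _, insert_nonempty _ _, v, ?_⟩
      intro u hu
      have h5 := hins t ht hu
      simp only [hA, mem_filter] at h5
      exact h5.2
    have e1 : ((k-1:ℕ):ℚ) + 1 = (k:ℚ) := by
      have h6 : 1 ≤ k := by omega
      push_cast [h6]; ring
    calc ((2:ℚ)^k - 1)/(k:ℚ)
        = ∑ t ∈ B.powerset, (1:ℚ)/((#t:ℚ)+1) := by
          have h7 : k - 1 + 1 = k := by omega
          rw [sum_powerset_inv_card B, hBcard, h7, e1]
      _ ≤ ∑ t ∈ B.powerset, (1:ℚ)/(#(c (insert v t)):ℚ) := by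
          apply sum_le_sum; intro t ht
          have hpos : 0 < #(c (insert v t)) := card_pos.mpr ⟨v, hcmem t ht⟩
          have hle : #(c (insert v t)) ≤ #t + 1 :=
            (card_le_card (hcsub _)).trans (card_insert_le _ _)
          apply one_div_le_one_div_of_le
          · exact_mod_cast hpos
          · exact_mod_cast hle
      _ = ∑ s ∈ B.powerset.image (insert v), (1:ℚ)/(#(c s):ℚ) := by
          rw [sum_image]
          intro t1 ht1 t2 ht2 heq
          have hv1 : v ∉ t1 := fun h => hvB (mem_powerset.mp ht1 h)
          have hv2 : v ∉ t2 := fun h => hvB (mem_powerset.mp ht2 h)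
          rw [← erase_insert hv1, heq, erase_insert hv2]
      _ ≤ ∑ s ∈ D.filter (fun s => v ∈ c s), (1:ℚ)/(#(c s):ℚ) := by
          apply sum_le_sum_of_subset_of_nonneg
          · intro s hs
            obtain ⟨t, ht, rfl⟩ := mem_image.mp hs
            exact hmemD t ht
          · intro s _ _; positivity
  have key : ((r * (2^k - 1) : ℕ) : ℚ) ≤ (#D : ℚ) := by
    calc ((r * (2^k - 1) : ℕ) : ℚ) = ∑ _v : V, ((2:ℚ)^k - 1)/(k:ℚ) := by
          rw [Finset.sum_const, card_univ, hcard, nsmul_eq_mul]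
          push_cast [Nat.one_le_two_pow]
          field_simp
      _ ≤ ∑ v : V, ∑ s ∈ D.filter (fun s => v ∈ c s), (1:ℚ)/(#(c s):ℚ) :=
          sum_le_sum (fun v _ => h1 v)
      _ = ∑ v : V, ∑ s ∈ D, if v ∈ c s then (1:ℚ)/(#(c s):ℚ) else 0 := by
          apply sum_congr rfl; intro v _; rw [sum_filter]
      _ = ∑ s ∈ D, ∑ v : V, if v ∈ c s then (1:ℚ)/(#(c s):ℚ) else 0 := Finset.sum_comm
      _ ≤ ∑ _s ∈ D, (1:ℚ) := by
          apply sum_le_sum; intro s _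
          rw [Finset.sum_ite_mem, univ_inter, sum_const, nsmul_eq_mul]
          rcases Nat.eq_zero_or_pos #(c s) with h|h
          · simp [h]
          · rw [mul_one_div, div_self (by exact_mod_cast h.ne' : (#(c s):ℚ) ≠ 0)]
      _ = (#D : ℚ) := by simp
  exact_mod_cast key
lemma mul_le_pow_self' (a : ℕ) (ha : 2 ≤ a) : ∀ r : ℕ, r * a ≤ a ^ r := by
  intro r
  induction r with
  | zero => simp
  | succ r ih =>
    have h1 : r + 1 ≤ a ^ r := by
      calc r + 1 ≤ 2 ^ r := Nat.lt_two_pow_self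
        _ ≤ a ^ r := Nat.pow_le_pow_left ha r
    calc (r+1) * a ≤ a ^ r * a := Nat.mul_le_mul_right a h1
      _ = a ^ (r+1) := (pow_succ a r).symm

lemma part1 {V : Type} [Fintype V] (G : SimpleGraph V) [DecidableRel G.Adj]
    (d n : ℕ) (hd : 2 ≤ d) (hn : d + 2 ≤ n) (hdvd : (n - d) ∣ n)
    (hcard : Fintype.card V = n) (hdeg : ∀ v, G.degree v ≤ d) :
    numConnDomSets G ≤ 2 ^ n - (n / (n - d)) * 2 ^ (n - d) + n / (n - d) - 1 := by
  classical
  have hk2 : 2 ≤ n - d := by omega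
  have hrk : (n/(n-d)) * (n-d) = n := Nat.div_mul_cancel hdvd
  set p : Finset V → Prop := fun s => (G.induce (s:Set V)).Connected ∧
    ∀ v ∉ s, ∃ u ∈ s, G.Adj u v with hp
  have hnum : numConnDomSets G = #(univ.filter p) :=
    numConnDomSets_eq G p (fun s => Iff.rfl)
  have hsum : #(univ.filter p) + #(univ.filter (fun s => ¬ p s)) = 2^n := by
    rw [card_filter_add_card_filter_not, card_univ, Fintype.card_finset, hcard]
  have hDlb := D_lb G (n-d) (n/(n-d)) hk2 (by rw [hcard, hrk])
    (fun v => by have := hdeg v; omega)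
  have hsubset : insert ∅ (univ.filter (fun s : Finset V =>
      s.Nonempty ∧ ∃ v : V, ∀ u ∈ s, ¬ G.Adj v u)) ⊆ univ.filter (fun s => ¬ p s) := by
    intro s hs
    rw [mem_insert] at hs
    rw [mem_filter]
    refine ⟨mem_univ _, ?_⟩
    rcases hs with rfl | hs
    · rintro ⟨hconn, -⟩
      have h8 := hconn.nonempty
      simp at h8
    · rw [mem_filter] at hs
      obtain ⟨-, -, v, hv⟩ := hs
      apply not_connDom G v s hv
      have h1 : #(univ.filter (G.Adj v)) + #(univ.filter (fun u => ¬ G.Adj v u))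
          = Fintype.card V := by
        rw [card_filter_add_card_filter_not, card_univ]
      have h2 : #(univ.filter (G.Adj v)) = G.degree v := by
        rw [degree]; congr 1; ext u; simp [mem_neighborFinset]
      have h3 : 1 < #(univ.filter (fun u => ¬ G.Adj v u)) := by
        have := hdeg v; omega
      obtain ⟨u, hu, hune⟩ := exists_mem_ne h3 v
      rw [mem_filter] at hu
      exact ⟨u, hune, hu.2⟩
  have h9 : (∅:Finset V) ∉ univ.filter (fun s : Finset V =>
      s.Nonempty ∧ ∃ v : V, ∀ u ∈ s, ¬ G.Adj v u) := by simp
  have hbad : (n/(n-d)) * (2^(n-d) - 1) + 1 ≤ #(univ.filter (fun s => ¬ p s)) := by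
    calc (n/(n-d)) * (2^(n-d) - 1) + 1
        ≤ #(univ.filter (fun s : Finset V =>
            s.Nonempty ∧ ∃ v : V, ∀ u ∈ s, ¬ G.Adj v u)) + 1 := by omega
      _ = #(insert ∅ (univ.filter (fun s : Finset V =>
            s.Nonempty ∧ ∃ v : V, ∀ u ∈ s, ¬ G.Adj v u))) := (card_insert_of_notMem h9).symm
      _ ≤ _ := card_le_card hsubset
  have h2p : 1 ≤ 2^(n-d) := Nat.one_le_two_pow
  have e1 : (n/(n-d)) * (2^(n-d) - 1) + (n/(n-d)) = (n/(n-d)) * 2^(n-d) := by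
    calc (n/(n-d)) * (2^(n-d) - 1) + (n/(n-d)) = (n/(n-d)) * ((2^(n-d) - 1) + 1) := by ring
      _ = _ := by rw [Nat.sub_add_cancel h2p]
  have e2 : (n/(n-d)) * 2^(n-d) ≤ 2^n := by
    calc (n/(n-d)) * 2^(n-d) ≤ (2^(n-d)) ^ (n/(n-d)) :=
          mul_le_pow_self' _ (Nat.one_lt_two_pow_iff.mpr (by omega)) _
      _ = 2^((n-d) * (n/(n-d))) := (pow_mul 2 _ _).symm
      _ = 2^n := by rw [Nat.mul_div_cancel' hdvd]
  have hr1 : 1 ≤ n/(n-d) := (Nat.one_le_div_iff (by omega)).mpr (by omega)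
  rw [hnum]
  omega
lemma part2 (r k : ℕ) (hr : 2 ≤ r) (hk : 2 ≤ k) :
    numConnDomSets (completeMultipartiteGraph (fun _ : Fin r => Fin k)) =
      2 ^ (r * k) - r * 2 ^ k + r - 1 := by
  classical
  set G := completeMultipartiteGraph (fun _ : Fin r => Fin k) with hG
  have hadj : ∀ x y : (_ : Fin r) × Fin k, G.Adj x y ↔ x.1 ≠ y.1 := by
    intro x y; simp [hG, completeMultipartiteGraph]
  have hcard : Fintype.card ((_ : Fin r) × Fin k) = r * k := by
    simp [Fintype.card_sigma]
  set q : Finset ((_ : Fin r) × Fin k) → Prop :=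
    fun s => ∃ a ∈ s, ∃ b ∈ s, a.1 ≠ b.1 with hqdef
  have hq : ∀ s, q s ↔ ((G.induce (s:Set ((_ : Fin r) × Fin k))).Connected ∧
      ∀ v ∉ s, ∃ u ∈ s, G.Adj u v) := by
    intro s
    constructor
    · rintro ⟨a, ha, b, hb, hab⟩
      have hadj' : ∀ (x y : ↑(s : Set ((_ : Fin r) × Fin k))),
          (x:(_ : Fin r) × Fin k).1 ≠ (y:(_ : Fin r) × Fin k).1 →
          (G.induce (s:Set ((_ : Fin r) × Fin k))).Adj x y := by
        intro x y h
        simp only [induce, comap_adj, Function.Embedding.coe_subtype]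
        exact (hadj _ _).mpr h
      constructor
      · rw [connected_iff]
        refine ⟨?_, ⟨⟨a, by simpa using ha⟩⟩⟩
        intro x y
        by_cases hxy : (x:(_ : Fin r) × Fin k).1 = (y:(_ : Fin r) × Fin k).1
        · by_cases hax : (a:(_ : Fin r) × Fin k).1 = (x:(_ : Fin r) × Fin k).1
          · have hbx : (b:(_ : Fin r) × Fin k).1 ≠ (x:(_ : Fin r) × Fin k).1 :=
              fun h => hab (hax ▸ h ▸ rfl)
            exact ((hadj' x ⟨b, by simpa using hb⟩ (fun h => hbx h.symm)).reachable).trans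
              ((hadj' ⟨b, by simpa using hb⟩ y (fun h => hbx (h.trans hxy.symm))).reachable)
          · exact ((hadj' x ⟨a, by simpa using ha⟩ (fun h => hax h.symm)).reachable).trans
              ((hadj' ⟨a, by simpa using ha⟩ y (fun h => hax (h.trans hxy.symm))).reachable)
        · exact (hadj' x y hxy).reachable
      · intro v hv
        by_cases hav : a.1 = v.1
        · refine ⟨b, hb, (hadj _ _).mpr ?_⟩
          exact fun h => hab (hav ▸ h ▸ rfl)
        · exact ⟨a, ha, (hadj _ _).mpr hav⟩
    · rintro ⟨hconn, hdom⟩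
      by_contra hnq
      simp only [hqdef] at hnq
      push_neg at hnq
      rcases s.eq_empty_or_nonempty with rfl | ⟨x, hx⟩
      · have h8 := hconn.nonempty
        simp at h8
      · by_cases hex : ∃ y ∈ s, y ≠ x
        · obtain ⟨y, hy, hyx⟩ := hex
          exact not_conn_of_isolated G s x y hx hy hyx
            (fun w hw => fun hadjw => ((hadj _ _).mp hadjw) (hnq x hx w hw)) hconn
        · push_neg at hex
          obtain ⟨j, hj⟩ := Fintype.exists_ne_of_one_lt_card (by simp; omega : 1 < Fintype.card (Fin k)) x.2
          have hyx : (⟨x.1, j⟩ : (_ : Fin r) × Fin k) ≠ x := by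
            intro h
            exact hj (congrArg (fun y : (_ : Fin r) × Fin k => y.2) h)
          have hys : (⟨x.1, j⟩ : (_ : Fin r) × Fin k) ∉ s := fun h => hyx (hex _ h)
          obtain ⟨u, hu, hadju⟩ := hdom _ hys
          have hux : u = x := hex u hu
          exact ((hadj _ _).mp hadju) (by rw [hux])
  have hnum : numConnDomSets G = #(univ.filter q) := numConnDomSets_eq G q hq
  have hsum : #(univ.filter q) + #(univ.filter (fun s => ¬ q s)) = 2^(r*k) := by
    rw [card_filter_add_card_filter_not, card_univ, Fintype.card_finset, hcard]
  set part : Fin r → Finset ((_ : Fin r) × Fin k) :=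
    fun i => univ.filter (fun x => x.1 = i) with hpart
  have hmempart : ∀ i (x : (_ : Fin r) × Fin k), x ∈ part i ↔ x.1 = i := by
    intro i x; simp [hpart]
  have hpartcard : ∀ i, #(part i) = k := by
    intro i
    have himg : part i = univ.image (fun j : Fin k => (⟨i, j⟩ : (_ : Fin r) × Fin k)) := by
      ext ⟨xi, xj⟩
      simp only [hmempart, mem_image, mem_univ, true_and]
      constructor
      · rintro rfl; exact ⟨xj, rfl⟩
      · rintro ⟨j, hj⟩; cases hj; rfl
    rw [himg, card_image_of_injective _ sigma_mk_injective, card_univ, Fintype.card_fin]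
  have hset : univ.filter (fun s : Finset ((_ : Fin r) × Fin k) => ¬ q s) =
      insert ∅ (univ.biUnion (fun i => (part i).powerset.filter (fun t => t ≠ ∅))) := by
    ext s
    constructor
    · intro hs
      rw [mem_filter] at hs
      have hnq := hs.2
      simp only [hqdef] at hnq
      push_neg at hnq
      rw [mem_insert]
      rcases s.eq_empty_or_nonempty with rfl | ⟨x, hx⟩
      · exact Or.inl rfl
      · refine Or.inr (mem_biUnion.mpr ⟨x.1, mem_univ _, ?_⟩)
        rw [mem_filter, mem_powerset]
        refine ⟨fun y hy => (hmempart _ _).mpr (hnq y hy x hx), ?_⟩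
        intro h; rw [h] at hx; simp at hx
    · intro hs
      rw [mem_insert] at hs
      rw [mem_filter]
      refine ⟨mem_univ _, ?_⟩
      rcases hs with rfl | hs
      · simp only [hqdef]; rintro ⟨a, ha, -⟩; simp at ha
      · obtain ⟨i, -, hi⟩ := mem_biUnion.mp hs
        rw [mem_filter, mem_powerset] at hi
        simp only [hqdef]
        rintro ⟨a, ha, b, hb, hab⟩
        exact hab (((hmempart _ _).mp (hi.1 ha)).trans ((hmempart _ _).mp (hi.1 hb)).symm)
  have hemptyn : (∅ : Finset ((_ : Fin r) × Fin k)) ∉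
      univ.biUnion (fun i => (part i).powerset.filter (fun t => t ≠ ∅)) := by simp
  have hdisj : ∀ i ∈ (univ : Finset (Fin r)), ∀ j ∈ (univ : Finset (Fin r)), i ≠ j →
      Disjoint ((part i).powerset.filter (fun t => t ≠ ∅))
        ((part j).powerset.filter (fun t => t ≠ ∅)) := by
    intro i _ j _ hij
    rw [Finset.disjoint_left]
    intro t hti htj
    rw [mem_filter, mem_powerset] at hti htj
    obtain ⟨x, hx⟩ := nonempty_iff_ne_empty.mpr hti.2
    exact hij (((hmempart _ _).mp (hti.1 hx)).symm.trans ((hmempart _ _).mp (htj.1 hx)))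
  have hcount : #(univ.filter (fun s : Finset ((_ : Fin r) × Fin k) => ¬ q s)) =
      r * (2^k - 1) + 1 := by
    rw [hset, card_insert_of_notMem hemptyn, card_biUnion hdisj]
    have heach : ∀ i ∈ (univ : Finset (Fin r)),
        #((part i).powerset.filter (fun t => t ≠ ∅)) = 2^k - 1 := by
      intro i _
      have he : (part i).powerset.filter (fun t => t ≠ ∅) = (part i).powerset.erase ∅ := by
        ext t; rw [mem_filter, mem_erase]; tauto
      rw [he, card_erase_of_mem (empty_mem_powerset _), card_powerset, hpartcard]
    rw [Finset.sum_congr rfl heach, sum_const, card_univ, Fintype.card_fin, smul_eq_mul]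
  have h2p : 1 ≤ 2^k := Nat.one_le_two_pow
  have e1 : r * (2^k - 1) + r = r * 2^k := by
    calc r * (2^k - 1) + r = r * ((2^k - 1) + 1) := by ring
      _ = _ := by rw [Nat.sub_add_cancel h2p]
  have e2 : r * 2^k ≤ 2^(r*k) := by
    calc r * 2^k ≤ (2^k) ^ r := mul_le_pow_self' _ (Nat.one_lt_two_pow_iff.mpr (by omega)) _
      _ = 2^(k*r) := (pow_mul 2 _ _).symm
      _ = 2^(r*k) := by rw [Nat.mul_comm]
  rw [hnum]
  omega
theorem stmt8 (d n : ℕ) (hd : 2 ≤ d) (hn : d + 2 ≤ n) (hdvd : (n - d) ∣ n) :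
    (∀ (V : Type) [Fintype V] (G : SimpleGraph V) [DecidableRel G.Adj],
      Fintype.card V = n → (∀ v, G.degree v ≤ d) →
      numConnDomSets G ≤ 2 ^ n - (n / (n - d)) * 2 ^ (n - d) + n / (n - d) - 1) ∧
    numConnDomSets (completeMultipartiteGraph (fun _ : Fin (n / (n - d)) => Fin (n - d))) =
      2 ^ n - (n / (n - d)) * 2 ^ (n - d) + n / (n - d) - 1 := by
  have hk2 : 2 ≤ n - d := by omega
  have hrk : (n/(n-d)) * (n-d) = n := Nat.div_mul_cancel hdvd
  have hr2 : 2 ≤ n / (n - d) := by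
    by_contra h
    push_neg at h
    have h1 : n/(n-d) ≤ 1 := by omega
    have h2 : (n/(n-d)) * (n-d) ≤ 1 * (n-d) := Nat.mul_le_mul_right _ h1
    omega
  constructor
  · intro V _ G _ hcard hdeg
    exact part1 G d n hd hn hdvd hcard hdeg
  · have h := part2 (n/(n-d)) (n-d) hr2 hk2
    rwa [hrk] at h
end

section
/- Let G be K_{d,d−1} (d ≥ 2) together with a perfect matching M of d/2 edges added on the bipartition class of size d (d even). Then the number of nonempty connected vertex subsets is N(G) = (2^d − 1)(2^{d−1} − 1) + 5d/2 − 1. -/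
open SimpleGraph

/-- `K_{d,d-1}` together with a perfect matching on the part of size `d`
(pairing vertices `2i` and `2i+1`). -/
def KddMinusOnePlusMatching (d : ℕ) : SimpleGraph (Fin d ⊕ Fin (d - 1)) :=
  completeBipartiteGraph (Fin d) (Fin (d - 1)) ⊔
    fromRel (fun a b => ∃ a' b' : Fin d, a = Sum.inl a' ∧ b = Sum.inl b' ∧
      (a' : ℕ) / 2 = (b' : ℕ) / 2)

section Aux

variable {d : ℕ}

lemma adj_lr (a : Fin d) (b : Fin (d-1)) :
    (KddMinusOnePlusMatching d).Adj (.inl a) (.inr b) := by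
  simp [KddMinusOnePlusMatching]

lemma adj_ll (a b : Fin d) :
    (KddMinusOnePlusMatching d).Adj (.inl a) (.inl b) ↔ a ≠ b ∧ (a:ℕ)/2 = (b:ℕ)/2 := by
  simp [KddMinusOnePlusMatching, fromRel_adj]
  aesop

lemma not_adj_rr (a b : Fin (d-1)) :
    ¬ (KddMinusOnePlusMatching d).Adj (.inr a) (.inr b) := by
  simp [KddMinusOnePlusMatching, fromRel_adj]

/-- pair class of a left vertex -/
def pc : (Fin d ⊕ Fin (d-1)) → ℕ := Sum.elim (fun a => (a:ℕ)/2) (fun _ => 0)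

lemma conn_char (s : Finset (Fin d ⊕ Fin (d-1))) :
    ((KddMinusOnePlusMatching d).induce (s : Set _)).Connected ↔
      (s.toLeft.Nonempty ∧ s.toRight.Nonempty) ∨ ((∃ v, s = {v}) ∨
      (∃ a b : Fin d, a ≠ b ∧ (a:ℕ)/2 = (b:ℕ)/2 ∧ s = {Sum.inl a, Sum.inl b})) := by
  constructor
  · intro hconn
    obtain ⟨⟨v0, hv0⟩⟩ := hconn.nonempty
    by_cases hL : s.toLeft.Nonempty
    · by_cases hR : s.toRight.Nonempty
      · exact Or.inl ⟨hL, hR⟩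
      · -- all elements are inl
        right
        have hinl : ∀ v ∈ s, ∃ a, v = Sum.inl a := by
          intro v hv
          rcases v with a | b
          · exact ⟨a, rfl⟩
          · exact absurd ⟨b, Finset.mem_toRight.2 hv⟩ hR
        have key : ∀ x y : (s : Set (Fin d ⊕ Fin (d-1))),
            ((KddMinusOnePlusMatching d).induce (s : Set _)).Reachable x y →
              pc x.1 = pc y.1 := by
          intro x y hxy
          obtain ⟨w⟩ := hxy
          induction w with
          | nil => rfl
          | @cons u v w h p ih =>
            refine Eq.trans ?_ ih
            have hadj : (KddMinusOnePlusMatching d).Adj u.1 v.1 := h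
            obtain ⟨a, ha⟩ := hinl u.1 u.2
            obtain ⟨b, hb⟩ := hinl v.1 v.2
            rw [ha, hb, adj_ll] at hadj
            rw [ha, hb]
            simpa [pc] using hadj.2
        obtain ⟨a0, ha0⟩ := hinl v0 hv0
        subst ha0
        have hall : ∀ v ∈ s, ∃ a : Fin d, v = Sum.inl a ∧ (a:ℕ)/2 = (a0:ℕ)/2 := by
          intro v hv
          obtain ⟨a, rfl⟩ := hinl v hv
          refine ⟨a, rfl, ?_⟩
          have := key ⟨_, hv⟩ ⟨_, hv0⟩ (hconn.preconnected _ _)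
          simpa [pc] using this
        by_cases hsing : ∀ v ∈ s, v = Sum.inl a0
        · exact Or.inl ⟨Sum.inl a0, Finset.eq_singleton_iff_unique_mem.2 ⟨hv0, hsing⟩⟩
        · push_neg at hsing
          obtain ⟨v1, hv1, hne1⟩ := hsing
          obtain ⟨a1, rfl, ha1⟩ := hall v1 hv1
          have hne : a1 ≠ a0 := fun h => hne1 (by rw [h])
          refine Or.inr ⟨a0, a1, hne.symm, ha1.symm, ?_⟩
          apply Finset.Subset.antisymm
          · intro v hv
            obtain ⟨a, rfl, ha⟩ := hall v hv
            have h1 : (a1:ℕ) ≠ (a0:ℕ) := fun h => hne (Fin.ext h)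
            have : (a:ℕ) = (a0:ℕ) ∨ (a:ℕ) = (a1:ℕ) := by omega
            rcases this with h | h
            · simp [Fin.ext h]
            · simp [Fin.ext h]
          · intro v hv
            simp only [Finset.mem_insert, Finset.mem_singleton] at hv
            rcases hv with rfl | rfl
            · exact hv0
            · exact hv1
    · -- all elements are inr; no edges, so singleton
      have hinr : ∀ v ∈ s, ∃ b, v = Sum.inr b := by
        intro v hv
        rcases v with a | b
        · exact absurd ⟨a, Finset.mem_toLeft.2 hv⟩ hL
        · exact ⟨b, rfl⟩
      have key : ∀ x y : (s : Set (Fin d ⊕ Fin (d-1))),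
          ((KddMinusOnePlusMatching d).induce (s : Set _)).Reachable x y → x = y := by
        intro x y hxy
        obtain ⟨w⟩ := hxy
        induction w with
        | nil => rfl
        | @cons u v w h p ih =>
          exfalso
          have hadj : (KddMinusOnePlusMatching d).Adj u.1 v.1 := h
          obtain ⟨a, ha⟩ := hinr u.1 u.2
          obtain ⟨b, hb⟩ := hinr v.1 v.2
          rw [ha, hb] at hadj
          exact not_adj_rr a b hadj
      refine Or.inr (Or.inl ⟨v0, Finset.eq_singleton_iff_unique_mem.2 ⟨hv0, ?_⟩⟩)
      intro v hv
      have := key ⟨v, hv⟩ ⟨v0, hv0⟩ (hconn.preconnected _ _)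
      exact congrArg Subtype.val this
  · rintro (⟨⟨a0, ha0⟩, ⟨b0, hb0⟩⟩ | ⟨v, rfl⟩ | ⟨a, b, hab, hdiv, rfl⟩)
    · rw [Finset.mem_toLeft] at ha0
      rw [Finset.mem_toRight] at hb0
      rw [connected_iff_exists_forall_reachable]
      refine ⟨⟨Sum.inr b0, hb0⟩, ?_⟩
      rintro ⟨v, hv⟩
      rcases v with a | b
      · exact (Adj.reachable (by exact adj_lr a b0)).symm
      · by_cases hbb : b = b0
        · subst hbb; rfl
        · have h1 : ((KddMinusOnePlusMatching d).induce (s : Set _)).Adj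
              ⟨Sum.inr b0, hb0⟩ ⟨Sum.inl a0, ha0⟩ := (adj_lr a0 b0).symm
          have h2 : ((KddMinusOnePlusMatching d).induce (s : Set _)).Adj
              ⟨Sum.inl a0, ha0⟩ ⟨Sum.inr b, hv⟩ := adj_lr a0 b
          exact (h1.reachable).trans h2.reachable
    · rw [connected_iff_exists_forall_reachable]
      refine ⟨⟨v, by simp⟩, ?_⟩
      rintro ⟨w, hw⟩
      simp only [Finset.coe_singleton, Set.mem_singleton_iff] at hw
      subst hw
      rfl
    · rw [connected_iff_exists_forall_reachable]
      have hma : Sum.inl a ∈ ({Sum.inl a, Sum.inl b} : Finset (Fin d ⊕ Fin (d-1))) := by simp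
      refine ⟨⟨Sum.inl a, by simp⟩, ?_⟩
      rintro ⟨v, hv⟩
      simp only [Finset.coe_insert, Set.mem_insert_iff, Finset.coe_singleton,
        Set.mem_singleton_iff] at hv
      rcases hv with rfl | rfl
      · rfl
      · exact Adj.reachable (by exact (adj_ll a b).2 ⟨hab, hdiv⟩)

lemma card_nonempty_finsets (α : Type*) [Fintype α] [DecidableEq α] :
    (Finset.univ.filter (fun s : Finset α => s.Nonempty)).card = 2 ^ Fintype.card α - 1 := by
  classical
  have h : (Finset.univ.filter (fun s : Finset α => s.Nonempty)) = Finset.univ.erase ∅ := by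
    ext s
    simp [Finset.nonempty_iff_ne_empty]
  rw [h, Finset.card_erase_of_mem (Finset.mem_univ _), Finset.card_univ, Fintype.card_finset]

lemma cardP1 :
    (Finset.univ.filter (fun s : Finset (Fin d ⊕ Fin (d-1)) =>
      s.toLeft.Nonempty ∧ s.toRight.Nonempty)).card = (2^d - 1) * (2^(d-1) - 1) := by
  classical
  have h2 : ((Finset.univ.filter (fun s : Finset (Fin d) => s.Nonempty)) ×ˢ
      (Finset.univ.filter (fun s : Finset (Fin (d-1)) => s.Nonempty))).card
      = (2^d - 1) * (2^(d-1) - 1) := by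
    rw [Finset.card_product, card_nonempty_finsets, card_nonempty_finsets]
    simp
  rw [← h2]
  apply Finset.card_nbij' (fun s => (s.toLeft, s.toRight)) (fun p => p.1.disjSum p.2)
  · intro s hs
    simp only [Finset.mem_coe, Finset.mem_filter, Finset.mem_univ, true_and] at hs
    simp [Finset.mem_product, hs.1, hs.2]
  · intro p hp
    simp only [Finset.mem_coe, Finset.mem_product, Finset.mem_filter, Finset.mem_univ, true_and] at hp
    simp [hp.1, hp.2]
  · intro s _
    exact Finset.toLeft_disjSum_toRight
  · intro p _
    simp

lemma cardP2 :
    (Finset.univ.filter (fun s : Finset (Fin d ⊕ Fin (d-1)) => ∃ v, s = {v})).card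
      = d + (d - 1) := by
  classical
  have h : (Finset.univ.filter (fun s : Finset (Fin d ⊕ Fin (d-1)) => ∃ v, s = {v}))
      = Finset.univ.image (fun v => ({v} : Finset (Fin d ⊕ Fin (d-1)))) := by
    ext s
    simp [eq_comm]
  rw [h, Finset.card_image_of_injective _ Finset.singleton_injective, Finset.card_univ]
  simp

lemma cardP3 (hd2 : 2 ≤ d) (hdeven : Even d) :
    (Finset.univ.filter (fun s : Finset (Fin d ⊕ Fin (d-1)) =>
      ∃ a b : Fin d, a ≠ b ∧ (a:ℕ)/2 = (b:ℕ)/2 ∧ s = {Sum.inl a, Sum.inl b})).card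
      = d / 2 := by
  classical
  obtain ⟨k, hk⟩ := hdeven
  have hd0 : 0 < d := by omega
  set f : Fin d → Finset (Fin d ⊕ Fin (d-1)) :=
    fun a => {Sum.inl a, Sum.inl (⟨((a:ℕ)+1) % d, Nat.mod_lt _ hd0⟩ : Fin d)} with hf
  have hfilter : (Finset.univ.filter (fun s : Finset (Fin d ⊕ Fin (d-1)) =>
      ∃ a b : Fin d, a ≠ b ∧ (a:ℕ)/2 = (b:ℕ)/2 ∧ s = {Sum.inl a, Sum.inl b}))
      = (Finset.univ.filter (fun a : Fin d => (a:ℕ) % 2 = 0)).image f := by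
    ext s
    simp only [Finset.mem_filter, Finset.mem_univ, true_and, Finset.mem_image, hf]
    constructor
    · rintro ⟨a, b, hab, hdiv, rfl⟩
      have hv : (a:ℕ) ≠ (b:ℕ) := fun h => hab (Fin.ext h)
      have ha' := a.is_lt
      have hb' := b.is_lt
      rcases Nat.lt_or_ge (a:ℕ) (b:ℕ) with h | h
      · refine ⟨a, by omega, ?_⟩
        have hb1 : (b:ℕ) = (a:ℕ) + 1 := by omega
        have hlt : (a:ℕ) + 1 < d := by omega
        have : (⟨((a:ℕ)+1) % d, Nat.mod_lt _ hd0⟩ : Fin d) = b := by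
          apply Fin.ext
          simp only [Nat.mod_eq_of_lt hlt]
          omega
        rw [this]
      · refine ⟨b, by omega, ?_⟩
        have ha1 : (a:ℕ) = (b:ℕ) + 1 := by omega
        have hlt : (b:ℕ) + 1 < d := by omega
        have : (⟨((b:ℕ)+1) % d, Nat.mod_lt _ hd0⟩ : Fin d) = a := by
          apply Fin.ext
          simp only [Nat.mod_eq_of_lt hlt]
          omega
        rw [this, Finset.pair_comm]
    · rintro ⟨a, ha, rfl⟩
      have ha' := a.is_lt
      have hlt : (a:ℕ) + 1 < d := by omega
      have h1 : ((a:ℕ)+1) % d = (a:ℕ) + 1 := Nat.mod_eq_of_lt hlt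
      refine ⟨a, ⟨((a:ℕ)+1) % d, Nat.mod_lt _ hd0⟩, ?_, ?_, rfl⟩
      · intro h
        have := congrArg Fin.val h
        simp only [h1] at this
        omega
      · simp only [h1]
        omega
  rw [hfilter]
  rw [Finset.card_image_of_injOn]
  · have : (Finset.univ.filter (fun a : Fin d => (a:ℕ) % 2 = 0)).card
        = (Finset.univ : Finset (Fin k)).card := by
      refine Finset.card_nbij' (i := fun a : Fin d => (⟨(a:ℕ)/2, by have := a.is_lt; omega⟩ : Fin k))
        (j := fun j : Fin k => (⟨2*(j:ℕ), by have := j.is_lt; omega⟩ : Fin d)) ?_ ?_ ?_ ?_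
      · intro a _; exact Finset.mem_univ _
      · intro j _
        simp [Nat.mul_mod_right]
      · intro a ha
        simp only [Finset.mem_coe, Finset.mem_filter] at ha
        apply Fin.ext
        simp only
        omega
      · intro j _
        apply Fin.ext
        simp only
        omega
    rw [this, Finset.card_univ, Fintype.card_fin]
    omega
  · intro a ha b hb hab
    simp only [Finset.coe_filter, Set.mem_setOf_eq, Finset.mem_univ, true_and] at ha hb
    have halt : (a:ℕ) + 1 < d := by have := a.is_lt; omega
    have hblt : (b:ℕ) + 1 < d := by have := b.is_lt; omega
    have hmem : (Sum.inl a : Fin d ⊕ Fin (d-1)) ∈ f b := by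
      rw [← hab]; simp [hf]
    simp only [hf, Finset.mem_insert, Finset.mem_singleton, Sum.inl.injEq] at hmem
    rcases hmem with h | h
    · exact h
    · exfalso
      have := congrArg Fin.val h
      simp only [Nat.mod_eq_of_lt hblt] at this
      omega

end Aux

theorem stmt12 (d : ℕ) (hd : 2 ≤ d) (hdeven : Even d) :
    numConnSets (KddMinusOnePlusMatching d) =
      (2 ^ d - 1) * (2 ^ (d - 1) - 1) + 5 * d / 2 - 1 := by
  classical
  rw [numConnSets, Nat.card_eq_fintype_card, Fintype.card_subtype]
  have hchar : (Finset.univ.filter (fun s : Finset (Fin d ⊕ Fin (d-1)) =>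
      ((KddMinusOnePlusMatching d).induce (s : Set _)).Connected))
      = Finset.univ.filter (fun s : Finset (Fin d ⊕ Fin (d-1)) =>
        (s.toLeft.Nonempty ∧ s.toRight.Nonempty) ∨ ((∃ v, s = {v}) ∨
        (∃ a b : Fin d, a ≠ b ∧ (a:ℕ)/2 = (b:ℕ)/2 ∧ s = {Sum.inl a, Sum.inl b}))) :=
    Finset.filter_congr (fun s _ => by rw [conn_char])
  rw [hchar, Finset.filter_or, Finset.filter_or]
  have hdis23 : Disjoint
      (Finset.univ.filter (fun s : Finset (Fin d ⊕ Fin (d-1)) => ∃ v, s = {v}))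
      (Finset.univ.filter (fun s : Finset (Fin d ⊕ Fin (d-1)) =>
        ∃ a b : Fin d, a ≠ b ∧ (a:ℕ)/2 = (b:ℕ)/2 ∧ s = {Sum.inl a, Sum.inl b})) := by
    rw [Finset.disjoint_left]
    rintro s h2 h3
    simp only [Finset.mem_filter, Finset.mem_univ, true_and] at h2 h3
    obtain ⟨v, rfl⟩ := h2
    obtain ⟨a, b, hab, -, hs⟩ := h3
    have h1 : ({v} : Finset (Fin d ⊕ Fin (d-1))).card = 1 := Finset.card_singleton v
    rw [hs, Finset.card_pair (by simpa using hab)] at h1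
    omega
  have hdis123 : Disjoint
      (Finset.univ.filter (fun s : Finset (Fin d ⊕ Fin (d-1)) =>
        s.toLeft.Nonempty ∧ s.toRight.Nonempty))
      ((Finset.univ.filter (fun s : Finset (Fin d ⊕ Fin (d-1)) => ∃ v, s = {v})) ∪
       (Finset.univ.filter (fun s : Finset (Fin d ⊕ Fin (d-1)) =>
        ∃ a b : Fin d, a ≠ b ∧ (a:ℕ)/2 = (b:ℕ)/2 ∧ s = {Sum.inl a, Sum.inl b}))) := by
    rw [Finset.disjoint_left]
    rintro s h1 h23
    simp only [Finset.mem_filter, Finset.mem_univ, true_and] at h1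
    simp only [Finset.mem_union, Finset.mem_filter, Finset.mem_univ, true_and] at h23
    rcases h23 with ⟨v, rfl⟩ | ⟨a, b, hab, -, rfl⟩
    · have hl := h1.1.card_pos
      have hr := h1.2.card_pos
      have := Finset.card_toLeft_add_card_toRight (u := ({v} : Finset (Fin d ⊕ Fin (d-1))))
      rw [Finset.card_singleton] at this
      omega
    · obtain ⟨x, hx⟩ := h1.2
      rw [Finset.mem_toRight] at hx
      simp at hx
  rw [Finset.card_union_of_disjoint hdis123, Finset.card_union_of_disjoint hdis23,
    cardP1, cardP2, cardP3 hd hdeven]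
  obtain ⟨k, hk⟩ := hdeven
  generalize (2^d - 1) * (2^(d-1) - 1) = A
  omega
end

section
/- Let G be K_{d,d−2} (d ≥ 3) together with a cycle C_d added on the bipartition class of size d. Then the number of nonempty connected vertex subsets is N(G) = (2^d − 1)(2^{d−2} − 1) + d^2 − 1. -/
open SimpleGraph

/-- `K_{d,d-2}` together with a Hamiltonian cycle on the part of size `d`. -/
def KddMinusTwoPlusCycle (d : ℕ) : SimpleGraph (Fin d ⊕ Fin (d - 2)) :=
  completeBipartiteGraph (Fin d) (Fin (d - 2)) ⊔
    fromRel (fun a b => ∃ a' b' : Fin d, a = Sum.inl a' ∧ b = Sum.inl b' ∧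
      (cycleGraph d).Adj a' b')

open Finset Sum
open scoped Fin.NatCast Fin.CommRing

section Arc
variable {d : ℕ} [NeZero d]

/-- The arc of length `k` starting at `i` in `Fin d`. -/
def arcF (i : Fin d) (k : ℕ) : Finset (Fin d) :=
  (Finset.range k).image fun j : ℕ => i + (j : Fin d)

lemma mem_arcF {i x : Fin d} {k : ℕ} : x ∈ arcF i k ↔ ∃ j < k, i + (j : Fin d) = x := by
  simp [arcF]

lemma natCast_inj_of_lt {a b : ℕ} (ha : a < d) (hb : b < d) (h : (a : Fin d) = (b : Fin d)) :
    a = b := by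
  have := congrArg Fin.val h
  simp only [Fin.val_natCast] at this
  rwa [Nat.mod_eq_of_lt ha, Nat.mod_eq_of_lt hb] at this

lemma arcF_card {i : Fin d} {k : ℕ} (hk : k ≤ d) : (arcF i k).card = k := by
  rw [arcF, Finset.card_image_of_injOn, Finset.card_range]
  intro a ha b hb hab
  simp only [Finset.coe_range, Set.mem_Iio] at ha hb
  exact natCast_inj_of_lt (by omega) (by omega) (add_left_cancel hab)

lemma self_mem_arcF {i : Fin d} {k : ℕ} (hk : 1 ≤ k) : i ∈ arcF i k :=
  mem_arcF.2 ⟨0, hk, by simp⟩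

lemma sub_one_not_mem_arcF {i : Fin d} {k : ℕ} (hk : k ≤ d - 1) : i - 1 ∉ arcF i k := by
  rw [mem_arcF]
  rintro ⟨j, hj, h⟩
  have hd1 : 1 ≤ d := Nat.one_le_iff_ne_zero.2 (NeZero.ne d)
  have : ((j + 1 : ℕ) : Fin d) = 0 := by
    push_cast
    have : (j : Fin d) = -1 := add_left_cancel (a := i) (by rw [h]; ring)
    rw [this]; ring
  have := congrArg Fin.val this
  simp only [Fin.val_natCast, Fin.val_zero] at this
  rw [Nat.mod_eq_of_lt (by omega)] at this
  omega

end Arc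

lemma induce_singleton_connected {V : Type*} (G : SimpleGraph V) (v : V) :
    (G.induce {v}).Connected := by
  rw [connected_iff]
  refine ⟨?_, ⟨⟨v, rfl⟩⟩⟩
  rintro ⟨a, ha⟩ ⟨b, hb⟩
  simp only [Set.mem_singleton_iff] at ha hb
  subst ha; subst hb
  rfl

section Arc2
variable {d : ℕ} [NeZero d]

lemma finValOne (hd : 2 ≤ d) : (1 : Fin d).val = 1 := by
  rw [← Nat.cast_one (R := Fin d), Fin.val_natCast, Nat.mod_eq_of_lt hd]

lemma cycle_adj_of_sub (hd : 2 ≤ d) {u v : Fin d} (h : u - v = 1) :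
    (cycleGraph d).Adj u v :=
  cycleGraph_adj'.2 (Or.inl (by rw [h, finValOne hd]))

lemma arcF_succ {i : Fin d} {k : ℕ} : arcF i (k + 1) = insert (i + (k : Fin d)) (arcF i k) := by
  ext x
  simp only [mem_arcF, Finset.mem_insert]
  constructor
  · rintro ⟨j, hj, rfl⟩
    rcases Nat.lt_or_ge j k with h | h
    · exact Or.inr ⟨j, h, rfl⟩
    · have : j = k := by omega
      subst this; exact Or.inl rfl
  · rintro (rfl | ⟨j, hj, rfl⟩)
    · exact ⟨k, by omega, rfl⟩
    · exact ⟨j, by omega, rfl⟩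

lemma arcF_connected (hd : 2 ≤ d) (i : Fin d) :
    ∀ k, 1 ≤ k → k ≤ d → ((cycleGraph d).induce ↑(arcF i k)).Connected := by
  intro k
  induction k with
  | zero => omega
  | succ k ih =>
    intro _ hkd
    rcases Nat.eq_zero_or_pos k with rfl | hk
    · have : arcF i 1 = {i} := by
        ext x; simp [mem_arcF, eq_comm]
      rw [this, Finset.coe_singleton]
      exact induce_singleton_connected _ _
    · rw [arcF_succ, Finset.coe_insert, Set.insert_eq]
      have hcast : (k : Fin d) = ((k - 1 : ℕ) : Fin d) + 1 := by
        rw [← Nat.cast_add_one]; congr 1; omega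
      have hadj : (cycleGraph d).Adj (i + (k : Fin d)) (i + ((k - 1 : ℕ) : Fin d)) := by
        apply cycle_adj_of_sub hd
        rw [hcast]; ring
      exact connected_induce_union (induce_singleton_connected _ _).preconnected
        (ih hk (by omega)).preconnected rfl
        (by exact_mod_cast mem_arcF.2 ⟨k - 1, by omega, rfl⟩) hadj

lemma arcF_classify (hd : 2 ≤ d) {s : Finset (Fin d)}
    (hconn : ((cycleGraph d).induce (↑s : Set (Fin d))).Connected) :
    ∃ i k, 1 ≤ k ∧ k ≤ d ∧ s = arcF i k := by
  classical
  have hs : s.Nonempty := by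
    rcases hconn.nonempty with ⟨⟨x, hx⟩⟩; exact ⟨x, by exact_mod_cast hx⟩
  by_cases huniv : s = Finset.univ
  · refine ⟨0, d, by omega, le_rfl, huniv.trans ?_⟩
    exact (Finset.eq_univ_of_card _ ((arcF_card le_rfl).trans (Fintype.card_fin d).symm)).symm
  obtain ⟨x0, hx0⟩ := hs
  obtain ⟨a, ha⟩ : ∃ a, a ∉ s := by
    by_contra h; push_neg at h; exact huniv (Finset.eq_univ_iff_forall.2 h)
  have hex : ∃ j : ℕ, x0 - (j : Fin d) ∉ s :=
    ⟨(x0 - a).val, by rwa [Fin.cast_val_eq_self, sub_sub_cancel]⟩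
  set n := Nat.find hex with hnn
  have hn : x0 - (n : Fin d) ∉ s := Nat.find_spec hex
  have hn1 : 1 ≤ n := by
    rcases Nat.eq_zero_or_pos n with h | h
    · rw [h] at hn; simp only [Nat.cast_zero, sub_zero] at hn; exact absurd hx0 hn
    · exact h
  set i := x0 - ((n - 1 : ℕ) : Fin d) with hidef
  have his : i ∈ s := not_not.mp (Nat.find_min hex (by omega))
  have hi1 : i - 1 ∉ s := by
    have heq : i - 1 = x0 - (n : Fin d) := by
      have hc : ((n : ℕ) : Fin d) = ((n - 1 : ℕ) : Fin d) + 1 := by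
        rw [← Nat.cast_add_one]; congr 1; omega
      rw [hidef, hc]; ring
    rw [heq]; exact hn
  set P : ℕ → Prop := fun m => ∀ j < m, i + (j : Fin d) ∈ s with hPdef
  have hP1 : P 1 := by
    intro j hj
    have : j = 0 := by omega
    subst this; simpa using his
  set m := Nat.findGreatest P d with hmdef
  have hm1 : 1 ≤ m := Nat.le_findGreatest (by omega) hP1
  have hmd : m ≤ d := Nat.findGreatest_le d
  have hPm : P m := Nat.findGreatest_spec (by omega) hP1
  have harcsub : arcF i m ⊆ s := by
    intro x hx
    obtain ⟨j, hj, rfl⟩ := mem_arcF.1 hx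
    exact hPm j hj
  rcases Nat.lt_or_ge m d with hmlt | hge
  · have hnotP : ¬ P (m + 1) := Nat.findGreatest_is_greatest (n := d) (P := P) (by omega) (by omega)
    have him : i + (m : Fin d) ∉ s := by
      by_contra h
      apply hnotP
      intro j hj
      rcases Nat.lt_or_ge j m with h2 | h2
      · exact hPm j h2
      · have : j = m := by omega
        subst this; exact h
    refine ⟨i, m, hm1, hmd, Finset.Subset.antisymm ?_ harcsub⟩
    intro y hy
    by_contra hy2
    obtain ⟨w⟩ := hconn.preconnected ⟨i, by exact_mod_cast his⟩ ⟨y, by exact_mod_cast hy⟩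
    obtain ⟨dart, _, hfst, hsnd⟩ := w.exists_boundary_dart
      {v : (↑s : Set (Fin d)) | (v : Fin d) ∈ arcF i m}
      (by exact self_mem_arcF hm1) (by exact hy2)
    have hadj : (cycleGraph d).Adj ↑dart.fst ↑dart.snd := by
      have := dart.adj
      simpa [SimpleGraph.induce, comap_adj] using this
    obtain ⟨j, hj, hju⟩ := mem_arcF.1 hfst
    have hvs : (dart.snd : Fin d) ∈ s := by exact_mod_cast dart.snd.2
    rw [cycleGraph_adj'] at hadj
    rcases hadj with h | h
    · -- snd = fst - 1
      have h1 : (dart.fst : Fin d) - ↑dart.snd = 1 := Fin.ext (by rw [finValOne hd]; exact h)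
      have hveq : (dart.snd : Fin d) = i + (j : Fin d) - 1 := by
        linear_combination -h1 - hju
      rcases Nat.eq_zero_or_pos j with rfl | hj1
      · rw [Nat.cast_zero, add_zero] at hveq
        exact hi1 (hveq ▸ hvs)
      · apply hsnd
        have : (dart.snd : Fin d) = i + ((j - 1 : ℕ) : Fin d) := by
          have hc : ((j : ℕ) : Fin d) = ((j - 1 : ℕ) : Fin d) + 1 := by
            rw [← Nat.cast_add_one]; congr 1; omega
          rw [hveq, hc]; ring
        exact mem_arcF.2 ⟨j - 1, by omega, this.symm⟩
    · -- snd = fst + 1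
      have h1 : (dart.snd : Fin d) - ↑dart.fst = 1 := Fin.ext (by rw [finValOne hd]; exact h)
      have hveq : (dart.snd : Fin d) = i + ((j + 1 : ℕ) : Fin d) := by
        rw [Nat.cast_add_one]; linear_combination h1 - hju
      rcases Nat.lt_or_ge (j + 1) m with h2 | h2
      · exact hsnd (mem_arcF.2 ⟨j + 1, h2, hveq.symm⟩)
      · have : j + 1 = m := by omega
        rw [this] at hveq
        exact him (hveq ▸ hvs)
  · have hmeq : m = d := le_antisymm hmd hge
    have : s = Finset.univ := Finset.eq_univ_of_card _ <| le_antisymm (Finset.card_le_univ s) <| by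
      calc Fintype.card (Fin d) = d := Fintype.card_fin d
        _ = (arcF i m).card := by rw [arcF_card hmd, hmeq]
        _ ≤ s.card := Finset.card_le_card harcsub
    exact absurd this huniv

lemma arcF_d_univ {d : ℕ} [NeZero d] (i : Fin d) : arcF i d = Finset.univ :=
  Finset.eq_univ_of_card _ ((arcF_card le_rfl).trans (Fintype.card_fin d).symm)

lemma arcF_inj {d : ℕ} [NeZero d] {i i' : Fin d} {k k' : ℕ} (hk : 1 ≤ k) (hk' : 1 ≤ k')
    (hkd : k ≤ d - 1) (hk'd : k' ≤ d - 1) (h : arcF i k = arcF i' k') : i = i' ∧ k = k' := by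
  have hd1 : 1 ≤ d := Nat.one_le_iff_ne_zero.2 (NeZero.ne d)
  have hkk : k = k' := by
    have h1 : (arcF i k).card = k := arcF_card (by omega)
    have h2 : (arcF i' k').card = k' := arcF_card (by omega)
    rw [h, h2] at h1
    omega
  refine ⟨?_, hkk⟩
  have hmem : i' ∈ arcF i k := h ▸ self_mem_arcF hk'
  obtain ⟨j, hj, hju⟩ := mem_arcF.1 hmem
  rcases Nat.eq_zero_or_pos j with rfl | hj1
  · rw [← hju]; simp
  · exfalso
    apply sub_one_not_mem_arcF hk'd (i := i')
    rw [← h]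
    refine mem_arcF.2 ⟨j - 1, by omega, ?_⟩
    have hc : ((j : ℕ) : Fin d) = ((j - 1 : ℕ) : Fin d) + 1 := by
      rw [← Nat.cast_add_one]; congr 1; omega
    rw [← hju, hc]; ring

lemma cycle_count {d : ℕ} [NeZero d] (hd : 3 ≤ d)
    [inst : DecidablePred fun t : Finset (Fin d) =>
      ((cycleGraph d).induce (↑t : Set (Fin d))).Connected] :
    (Finset.univ.filter fun t : Finset (Fin d) =>
      ((cycleGraph d).induce (↑t : Set (Fin d))).Connected).card = d * (d - 1) + 1 := by
  classical
  set F : (Fin d × Fin (d - 1)) ⊕ Unit → Finset (Fin d) :=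
    Sum.elim (fun p => arcF p.1 (p.2.val + 1)) (fun _ => Finset.univ) with hF
  have hFinj : Function.Injective F := by
    rintro (⟨i, k⟩ | u) (⟨i', k'⟩ | u') h <;> simp only [hF, Sum.elim_inl, Sum.elim_inr] at h
    · obtain ⟨h1, h2⟩ := arcF_inj (by omega) (by omega) (by omega) (by omega) h
      have : k = k' := Fin.ext (by omega)
      subst this; subst h1; rfl
    · exfalso
      have := arcF_card (i := i) (k := k.val + 1) (by omega)
      rw [h] at this
      simp only [Finset.card_univ, Fintype.card_fin] at this
      omega
    · exfalso
      have := arcF_card (i := i') (k := k'.val + 1) (by omega)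
      rw [← h] at this
      simp only [Finset.card_univ, Fintype.card_fin] at this
      omega
    · rfl
  have himg : (Finset.univ.filter fun t : Finset (Fin d) =>
      ((cycleGraph d).induce (↑t : Set (Fin d))).Connected) = Finset.univ.image F := by
    ext t
    simp only [Finset.mem_filter, Finset.mem_univ, true_and, Finset.mem_image]
    constructor
    · intro hconn
      obtain ⟨i, k, hk1, hkd, rfl⟩ := arcF_classify (by omega) hconn
      rcases Nat.lt_or_ge k d with hlt | hge
      · refine ⟨Sum.inl (i, ⟨k - 1, by omega⟩), ?_⟩
        simp only [hF, Sum.elim_inl]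
        congr 1
        omega
      · have : k = d := by omega
        subst this
        exact ⟨Sum.inr (), (arcF_d_univ i).symm⟩
    · rintro ⟨(⟨i, k⟩ | u), rfl⟩
      · exact arcF_connected (by omega) i (k.val + 1) (by omega) (by omega)
      · show ((cycleGraph d).induce (↑(Finset.univ : Finset (Fin d)) : Set (Fin d))).Connected
        rw [← arcF_d_univ (0 : Fin d)]
        exact arcF_connected (by omega) 0 d (by omega) le_rfl
  rw [himg, Finset.card_image_of_injective _ hFinj, Finset.card_univ]
  simp only [Fintype.card_sum, Fintype.card_prod, Fintype.card_fin, Fintype.card_unit]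


section MainAdj
variable {d : ℕ}

lemma adj_inl_inr (a : Fin d) (b : Fin (d - 2)) :
    (KddMinusTwoPlusCycle d).Adj (Sum.inl a) (Sum.inr b) :=
  Or.inl (by simp)

lemma adj_inr_inl (a : Fin (d - 2)) (b : Fin d) :
    (KddMinusTwoPlusCycle d).Adj (Sum.inr a) (Sum.inl b) :=
  Or.inl (by simp)

lemma adj_inl_inl {a b : Fin d} :
    (KddMinusTwoPlusCycle d).Adj (Sum.inl a) (Sum.inl b) ↔ (cycleGraph d).Adj a b := by
  simp only [KddMinusTwoPlusCycle, sup_adj, fromRel_adj, completeBipartiteGraph_adj]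
  constructor
  · rintro (h | ⟨hne, (⟨a', b', h1, h2, h3⟩ | ⟨a', b', h1, h2, h3⟩)⟩)
    · simp at h
    · cases h1; cases h2; exact h3
    · cases h1; cases h2; exact h3.symm
  · intro h
    exact Or.inr ⟨by simpa using h.ne, Or.inl ⟨a, b, rfl, rfl, h⟩⟩

lemma not_adj_inr_inr {a b : Fin (d - 2)} :
    ¬ (KddMinusTwoPlusCycle d).Adj (Sum.inr a) (Sum.inr b) := by
  simp only [KddMinusTwoPlusCycle, sup_adj, fromRel_adj, completeBipartiteGraph_adj]
  rintro (h | ⟨hne, (⟨a', b', h1, h2, h3⟩ | ⟨a', b', h1, h2, h3⟩)⟩)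
  · simp at h
  · exact absurd h1 (by simp)
  · exact absurd h1 (by simp)

end MainAdj

section Char
variable {d : ℕ}

lemma coe_disjSum_set (s : Finset (Fin d)) (t : Finset (Fin (d - 2))) :
    (↑(s.disjSum t) : Set (Fin d ⊕ Fin (d - 2))) = Sum.inl '' ↑s ∪ Sum.inr '' ↑t := by
  ext (x | x) <;>
    simp [Finset.mem_coe, Finset.inl_mem_disjSum, Finset.inr_mem_disjSum]

/-- Iso between the cycle induced on `s` and the big graph induced on `inl '' s`. -/
noncomputable def isoLeft (s : Set (Fin d)) :
    (cycleGraph d).induce s ≃g (KddMinusTwoPlusCycle d).induce (Sum.inl '' s) where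
  toEquiv := Equiv.Set.image Sum.inl s Sum.inl_injective
  map_rel_iff' := by
    rintro ⟨a, ha⟩ ⟨b, hb⟩
    simp only [Equiv.Set.image_apply, comap_adj, Function.Embedding.coe_subtype]
    exact adj_inl_inl

lemma eq_of_reachable_edgeless {W : Type*} {H : SimpleGraph W}
    (h : ∀ a b : W, ¬ H.Adj a b) {u v : W} (r : H.Reachable u v) : u = v := by
  obtain ⟨w⟩ := r
  cases w with
  | nil => rfl
  | cons h' p => exact absurd h' (h _ _)

lemma induce_singleton_connected' {V : Type*} (G : SimpleGraph V) (v : V) :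
    (G.induce {v}).Connected := by
  rw [connected_iff]
  refine ⟨?_, ⟨⟨v, rfl⟩⟩⟩
  rintro ⟨a, ha⟩ ⟨b, hb⟩
  simp only [Set.mem_singleton_iff] at ha hb
  subst ha; subst hb
  rfl

lemma conn_disjSum_iff (hd : 3 ≤ d) (s : Finset (Fin d)) (t : Finset (Fin (d - 2))) :
    ((KddMinusTwoPlusCycle d).induce (↑(s.disjSum t) : Set (Fin d ⊕ Fin (d - 2)))).Connected ↔
      ((s.Nonempty ∧ t.Nonempty) ∨
       (((cycleGraph d).induce (↑s : Set (Fin d))).Connected ∧ t = ∅) ∨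
       (s = ∅ ∧ t.card = 1)) := by
  constructor
  · intro hconn
    rcases s.eq_empty_or_nonempty with rfl | hs
    · -- s empty
      rcases t.eq_empty_or_nonempty with rfl | ht
      · exfalso
        rcases hconn.nonempty with ⟨⟨x, hx⟩⟩
        simp [coe_disjSum_set] at hx
      · refine Or.inr (Or.inr ⟨rfl, ?_⟩)
        obtain ⟨b0, hb0⟩ := ht
        have hnoadj : ∀ a b : (↑((∅ : Finset (Fin d)).disjSum t) : Set (Fin d ⊕ Fin (d - 2))),
            ¬ ((KddMinusTwoPlusCycle d).induce _).Adj a b := by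
          rintro ⟨(a | a), ha⟩ ⟨(b | b), hb⟩ hab
          · rw [coe_disjSum_set] at ha; simp at ha
          · rw [coe_disjSum_set] at ha; simp at ha
          · rw [coe_disjSum_set] at hb; simp at hb
          · exact not_adj_inr_inr hab
        rw [Finset.card_eq_one]
        refine ⟨b0, Finset.eq_singleton_iff_unique_mem.2 ⟨hb0, fun x hx => ?_⟩⟩
        have hmem : ∀ b, b ∈ t → (Sum.inr b : Fin d ⊕ Fin (d - 2)) ∈
            (↑((∅ : Finset (Fin d)).disjSum t) : Set (Fin d ⊕ Fin (d - 2))) := by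
          intro b hb
          rw [coe_disjSum_set]
          exact Or.inr ⟨b, hb, rfl⟩
        have := eq_of_reachable_edgeless hnoadj
          (hconn.preconnected ⟨Sum.inr x, hmem x hx⟩ ⟨Sum.inr b0, hmem b0 hb0⟩)
        simpa using congrArg Subtype.val this
    · rcases t.eq_empty_or_nonempty with rfl | ht
      · refine Or.inr (Or.inl ⟨?_, rfl⟩)
        rw [(isoLeft (↑s : Set (Fin d))).connected_iff]
        have : (Sum.inl '' (↑s : Set (Fin d))) =
            (↑(s.disjSum (∅ : Finset (Fin (d - 2)))) : Set (Fin d ⊕ Fin (d - 2))) := by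
          rw [coe_disjSum_set]; simp
        rw [this]
        exact hconn
      · exact Or.inl ⟨hs, ht⟩
  · rintro (⟨⟨a0, ha0⟩, ⟨b0, hb0⟩⟩ | ⟨hcyc, rfl⟩ | ⟨rfl, hcard⟩)
    · -- both nonempty
      set S : Set (Fin d ⊕ Fin (d - 2)) := ↑(s.disjSum t) with hS
      have hmemL : ∀ a, a ∈ s → (Sum.inl a : Fin d ⊕ Fin (d - 2)) ∈ S := fun a ha => by
        rw [hS, coe_disjSum_set]; exact Or.inl ⟨a, ha, rfl⟩
      have hmemR : ∀ b, b ∈ t → (Sum.inr b : Fin d ⊕ Fin (d - 2)) ∈ S := fun b hb => by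
        rw [hS, coe_disjSum_set]; exact Or.inr ⟨b, hb, rfl⟩
      rw [connected_iff]
      refine ⟨?_, ⟨⟨Sum.inl a0, hmemL a0 ha0⟩⟩⟩
      have key : ∀ (v : Fin d ⊕ Fin (d - 2)) (hv : v ∈ S),
          ((KddMinusTwoPlusCycle d).induce S).Reachable ⟨v, hv⟩ ⟨Sum.inl a0, hmemL a0 ha0⟩ := by
        rintro (a | b) hv
        · exact (Adj.reachable (by exact adj_inl_inr a b0 :
            ((KddMinusTwoPlusCycle d).induce S).Adj ⟨Sum.inl a, hv⟩ ⟨Sum.inr b0, hmemR b0 hb0⟩)).trans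
            (Adj.reachable (by exact adj_inr_inl b0 a0 :
            ((KddMinusTwoPlusCycle d).induce S).Adj ⟨Sum.inr b0, hmemR b0 hb0⟩ ⟨Sum.inl a0, hmemL a0 ha0⟩))
        · exact Adj.reachable (by exact adj_inr_inl b a0 :
            ((KddMinusTwoPlusCycle d).induce S).Adj ⟨Sum.inr b, hv⟩ ⟨Sum.inl a0, hmemL a0 ha0⟩)
      rintro ⟨x, hx⟩ ⟨y, hy⟩
      exact (key x hx).trans (key y hy).symm
    · -- t empty, cycle connected
      have : (↑(s.disjSum (∅ : Finset (Fin (d - 2)))) : Set (Fin d ⊕ Fin (d - 2))) =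
          Sum.inl '' (↑s : Set (Fin d)) := by
        rw [coe_disjSum_set]; simp
      rw [this, ← (isoLeft (↑s : Set (Fin d))).connected_iff]
      exact hcyc
    · -- s empty, t singleton
      obtain ⟨b, rfl⟩ := Finset.card_eq_one.1 hcard
      have : (↑((∅ : Finset (Fin d)).disjSum {b}) : Set (Fin d ⊕ Fin (d - 2))) =
          {Sum.inr b} := by
        rw [coe_disjSum_set]; simp
      rw [this]
      exact induce_singleton_connected' _ _

end Char

section Count

lemma card_filter_nonempty (α : Type*) [Fintype α] [DecidableEq α]
    [inst : DecidablePred (Finset.Nonempty : Finset α → Prop)] :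
    (Finset.univ.filter (Finset.Nonempty : Finset α → Prop)).card =
      2 ^ Fintype.card α - 1 := by
  classical
  have h : (Finset.univ.filter (Finset.Nonempty : Finset α → Prop)) =
      Finset.univ.erase ∅ := by
    ext u; simp [Finset.nonempty_iff_ne_empty]
  rw [h, Finset.card_erase_of_mem (Finset.mem_univ _), Finset.card_univ, Fintype.card_finset]

lemma card_filter_card_one (α : Type*) [Fintype α] [DecidableEq α] :
    (Finset.univ.filter fun t : Finset α => t.card = 1).card = Fintype.card α := by
  have h : (Finset.univ.filter fun t : Finset α => t.card = 1) =
      Finset.univ.image (fun a : α => ({a} : Finset α)) := by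
    ext u; simp [Finset.card_eq_one, eq_comm]
  rw [h, Finset.card_image_of_injective _ Finset.singleton_injective, Finset.card_univ]

end Count


theorem stmt13 (d : ℕ) (hd : 3 ≤ d) :
    numConnSets (KddMinusTwoPlusCycle d) =
      (2 ^ d - 1) * (2 ^ (d - 2) - 1) + d ^ 2 - 1 := by
  classical
  haveI : NeZero d := ⟨by omega⟩
  -- Step 1: as a filter card
  have h0 : numConnSets (KddMinusTwoPlusCycle d) =
      (Finset.univ.filter fun u : Finset (Fin d ⊕ Fin (d - 2)) =>
        ((KddMinusTwoPlusCycle d).induce (↑u : Set (Fin d ⊕ Fin (d - 2)))).Connected).card := by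
    rw [numConnSets, Nat.card_eq_fintype_card]
    exact Fintype.card_subtype _
  rw [h0]
  -- Step 2: move to pairs of finsets
  set e : Finset (Fin d ⊕ Fin (d - 2)) ≃ Finset (Fin d) × Finset (Fin (d - 2)) :=
    { toFun := fun u => (u.toLeft, u.toRight)
      invFun := fun p => p.1.disjSum p.2
      left_inv := fun u => Finset.toLeft_disjSum_toRight
      right_inv := fun p => by simp } with he
  have h1 : (Finset.univ.filter fun u : Finset (Fin d ⊕ Fin (d - 2)) =>
        ((KddMinusTwoPlusCycle d).induce (↑u : Set (Fin d ⊕ Fin (d - 2)))).Connected).card =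
      (Finset.univ.filter fun p : Finset (Fin d) × Finset (Fin (d - 2)) =>
        ((KddMinusTwoPlusCycle d).induce
          (↑(p.1.disjSum p.2) : Set (Fin d ⊕ Fin (d - 2)))).Connected).card := by
    apply Finset.card_equiv e
    intro u
    simp only [Finset.mem_filter, Finset.mem_univ, true_and, he, Equiv.coe_fn_mk]
    rw [Finset.toLeft_disjSum_toRight]
  rw [h1]
  -- Step 3: rewrite by the characterization
  have h2 : (Finset.univ.filter fun p : Finset (Fin d) × Finset (Fin (d - 2)) =>
        ((KddMinusTwoPlusCycle d).induce
          (↑(p.1.disjSum p.2) : Set (Fin d ⊕ Fin (d - 2)))).Connected) =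
      (Finset.univ.filter fun p : Finset (Fin d) × Finset (Fin (d - 2)) =>
        ((p.1.Nonempty ∧ p.2.Nonempty) ∨
         (((cycleGraph d).induce (↑p.1 : Set (Fin d))).Connected ∧ p.2 = ∅) ∨
         (p.1 = ∅ ∧ p.2.card = 1))) := by
    apply Finset.filter_congr
    intro p _
    exact conn_disjSum_iff hd p.1 p.2
  rw [h2]
  -- Step 4: split the union
  rw [Finset.filter_or, Finset.filter_or]
  have hdisj1 : Disjoint
      (Finset.univ.filter fun p : Finset (Fin d) × Finset (Fin (d - 2)) =>
        p.1.Nonempty ∧ p.2.Nonempty)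
      ((Finset.univ.filter fun p : Finset (Fin d) × Finset (Fin (d - 2)) =>
        ((cycleGraph d).induce (↑p.1 : Set (Fin d))).Connected ∧ p.2 = ∅) ∪
       (Finset.univ.filter fun p : Finset (Fin d) × Finset (Fin (d - 2)) =>
        p.1 = ∅ ∧ p.2.card = 1)) := by
    rw [Finset.disjoint_left]
    intro p hp hp'
    simp only [Finset.mem_filter, Finset.mem_univ, true_and, Finset.mem_union] at hp hp'
    rcases hp' with ⟨-, h⟩ | ⟨h, -⟩
    · exact absurd h (Finset.nonempty_iff_ne_empty.1 hp.2)
    · exact absurd h (Finset.nonempty_iff_ne_empty.1 hp.1)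
  have hdisj2 : Disjoint
      (Finset.univ.filter fun p : Finset (Fin d) × Finset (Fin (d - 2)) =>
        ((cycleGraph d).induce (↑p.1 : Set (Fin d))).Connected ∧ p.2 = ∅)
      (Finset.univ.filter fun p : Finset (Fin d) × Finset (Fin (d - 2)) =>
        p.1 = ∅ ∧ p.2.card = 1) := by
    rw [Finset.disjoint_left]
    intro p hp hp'
    simp only [Finset.mem_filter, Finset.mem_univ, true_and] at hp hp'
    rcases hp.1.nonempty with ⟨⟨x, hx⟩⟩
    rw [hp'.1] at hx
    simp at hx
  rw [Finset.card_union_of_disjoint hdisj1, Finset.card_union_of_disjoint hdisj2]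
  -- Step 5: compute the three cards
  have hc1 : (Finset.univ.filter fun p : Finset (Fin d) × Finset (Fin (d - 2)) =>
        p.1.Nonempty ∧ p.2.Nonempty).card = (2 ^ d - 1) * (2 ^ (d - 2) - 1) := by
    rw [← Finset.univ_product_univ, Finset.filter_product, Finset.card_product,
      card_filter_nonempty, card_filter_nonempty, Fintype.card_fin, Fintype.card_fin]
  have hc2 : (Finset.univ.filter fun p : Finset (Fin d) × Finset (Fin (d - 2)) =>
        ((cycleGraph d).induce (↑p.1 : Set (Fin d))).Connected ∧ p.2 = ∅).card =
      d * (d - 1) + 1 := by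
    rw [← Finset.univ_product_univ,
      Finset.filter_product
        (fun s : Finset (Fin d) => ((cycleGraph d).induce (↑s : Set (Fin d))).Connected)
        (fun t : Finset (Fin (d - 2)) => t = ∅),
      Finset.card_product, cycle_count hd]
    rw [Finset.filter_eq' Finset.univ (∅ : Finset (Fin (d - 2))), if_pos (Finset.mem_univ _)]
    simp
  have hc3 : (Finset.univ.filter fun p : Finset (Fin d) × Finset (Fin (d - 2)) =>
        p.1 = ∅ ∧ p.2.card = 1).card = d - 2 := by
    rw [← Finset.univ_product_univ,
      Finset.filter_product
        (fun s : Finset (Fin d) => s = ∅)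
        (fun t : Finset (Fin (d - 2)) => t.card = 1),
      Finset.card_product, card_filter_card_one, Fintype.card_fin]
    rw [Finset.filter_eq' Finset.univ (∅ : Finset (Fin d)), if_pos (Finset.mem_univ _)]
    simp
  rw [hc1, hc2, hc3]
  -- Step 6: arithmetic
  obtain ⟨x, rfl⟩ : ∃ x, d = x + 3 := ⟨d - 3, by omega⟩
  have hq : (x + 3) ^ 2 = x * x + 6 * x + 9 := by ring
  have hm : (x + 3) * (x + 3 - 1) = x * x + 5 * x + 6 := by
    have : x + 3 - 1 = x + 2 := by omega
    rw [this]; ring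
  omega
end Arc2
end

section
/- If d + 1 divides n, then for every d-regular graph G on n vertices, the number of dominating sets of G is at most (2^{d+1} − 1)^{n/(d+1)}, with equality for the disjoint union of n/(d+1) copies of K_{d+1}. -/
open SimpleGraph
open Finset NNReal

/-- Superadditivity of the geometric mean (Minkowski-type inequality for products). -/
lemma geom_superadd {ι : Type*} (s : Finset ι) (hs : s.Nonempty) (a b : ι → ℝ≥0) :
    (∏ i ∈ s, a i) ^ ((s.card : ℝ)⁻¹) + (∏ i ∈ s, b i) ^ ((s.card : ℝ)⁻¹)
      ≤ (∏ i ∈ s, (a i + b i)) ^ ((s.card : ℝ)⁻¹) := by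
  have hk : (0:ℝ) < s.card := by exact_mod_cast Finset.card_pos.2 hs
  by_cases h0 : ∃ i ∈ s, a i + b i = 0
  · obtain ⟨i, hi, h⟩ := h0
    have h1 : (∏ i ∈ s, a i) = 0 := Finset.prod_eq_zero hi (add_eq_zero.1 h).1
    have h2 : (∏ i ∈ s, b i) = 0 := Finset.prod_eq_zero hi (add_eq_zero.1 h).2
    rw [h1, h2, NNReal.zero_rpow (by positivity), add_zero]
    positivity
  · push_neg at h0
    have hcprod : (∏ i ∈ s, (a i + b i)) ≠ 0 := Finset.prod_ne_zero_iff.2 h0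
    have hw : ∑ _i ∈ s, (s.card : ℝ≥0)⁻¹ = 1 := by
      rw [Finset.sum_const, nsmul_eq_mul, mul_inv_cancel₀]
      exact_mod_cast hk.ne'
    have key : ∀ f : ι → ℝ≥0, (∏ i ∈ s, f i) ^ ((s.card : ℝ)⁻¹)
        ≤ (∏ i ∈ s, (a i + b i)) ^ ((s.card : ℝ)⁻¹)
          * ∑ i ∈ s, (s.card : ℝ≥0)⁻¹ * (f i / (a i + b i)) := by
      intro f
      have h1 := NNReal.geom_mean_le_arith_mean_weighted s (fun _ => (s.card : ℝ≥0)⁻¹)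
        (fun i => f i / (a i + b i)) hw
      simp only [NNReal.coe_inv, NNReal.coe_natCast] at h1
      have h2 : (∏ i ∈ s, (f i / (a i + b i)) ^ ((s.card : ℝ)⁻¹))
          = (∏ i ∈ s, f i) ^ ((s.card : ℝ)⁻¹) / (∏ i ∈ s, (a i + b i)) ^ ((s.card : ℝ)⁻¹) := by
        rw [← NNReal.div_rpow, ← Finset.prod_div_distrib, NNReal.finset_prod_rpow]
      rw [h2] at h1
      calc (∏ i ∈ s, f i) ^ ((s.card : ℝ)⁻¹)
          = (∏ i ∈ s, f i) ^ ((s.card : ℝ)⁻¹) / (∏ i ∈ s, (a i + b i)) ^ ((s.card : ℝ)⁻¹)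
            * (∏ i ∈ s, (a i + b i)) ^ ((s.card : ℝ)⁻¹) := by
            rw [div_mul_cancel₀]
            exact (NNReal.rpow_pos (pos_iff_ne_zero.2 hcprod)).ne'
        _ ≤ (∑ i ∈ s, (s.card : ℝ≥0)⁻¹ * (f i / (a i + b i)))
            * (∏ i ∈ s, (a i + b i)) ^ ((s.card : ℝ)⁻¹) := by
            exact mul_le_mul_left h1 _
        _ = _ := mul_comm _ _
    calc (∏ i ∈ s, a i) ^ ((s.card : ℝ)⁻¹) + (∏ i ∈ s, b i) ^ ((s.card : ℝ)⁻¹)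
        ≤ (∏ i ∈ s, (a i + b i)) ^ ((s.card : ℝ)⁻¹)
          * (∑ i ∈ s, (s.card : ℝ≥0)⁻¹ * (a i / (a i + b i))
             + ∑ i ∈ s, (s.card : ℝ≥0)⁻¹ * (b i / (a i + b i))) := by
          rw [mul_add]; exact add_le_add (key a) (key b)
      _ = (∏ i ∈ s, (a i + b i)) ^ ((s.card : ℝ)⁻¹) := by
          rw [← Finset.sum_add_distrib]
          have : ∀ i ∈ s, (s.card : ℝ≥0)⁻¹ * (a i / (a i + b i))
              + (s.card : ℝ≥0)⁻¹ * (b i / (a i + b i)) = (s.card : ℝ≥0)⁻¹ := by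
            intro i hi
            rw [← mul_add, ← add_div, div_self (h0 i hi), mul_one]
          rw [Finset.sum_congr rfl this, hw, mul_one]

/-- Power-form combination step used in the induction of Shearer's lemma. -/
lemma combine_pow {ι : Type*} (s : Finset ι) (hs : s.Nonempty) (a b : ι → ℝ≥0) (M x y : ℝ≥0)
    (hx : x ^ s.card ≤ M * ∏ i ∈ s, a i) (hy : y ^ s.card ≤ M * ∏ i ∈ s, b i) :
    (x + y) ^ s.card ≤ M * ∏ i ∈ s, (a i + b i) := by
  have hk : (0:ℝ) < s.card := by exact_mod_cast Finset.card_pos.2 hs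
  set r : ℝ := (s.card : ℝ)⁻¹ with hr
  have hrpos : 0 ≤ r := by positivity
  have hself : ∀ z : ℝ≥0, (z ^ s.card) ^ r = z := by
    intro z
    rw [← NNReal.rpow_natCast z s.card, ← NNReal.rpow_mul, mul_inv_cancel₀ hk.ne', NNReal.rpow_one]
  have hx' : x ≤ M ^ r * (∏ i ∈ s, a i) ^ r := by
    rw [← hself x, ← NNReal.mul_rpow]; exact NNReal.rpow_le_rpow hx hrpos
  have hy' : y ≤ M ^ r * (∏ i ∈ s, b i) ^ r := by
    rw [← hself y, ← NNReal.mul_rpow]; exact NNReal.rpow_le_rpow hy hrpos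
  have hxy : x + y ≤ M ^ r * (∏ i ∈ s, (a i + b i)) ^ r := by
    calc x + y ≤ M ^ r * ((∏ i ∈ s, a i) ^ r + (∏ i ∈ s, b i) ^ r) := by
          rw [mul_add]; exact add_le_add hx' hy'
      _ ≤ M ^ r * (∏ i ∈ s, (a i + b i)) ^ r :=
          mul_le_mul_right (geom_superadd s hs a b) _
  calc (x + y) ^ s.card ≤ (M ^ r * (∏ i ∈ s, (a i + b i)) ^ r) ^ s.card :=
        pow_le_pow_left' hxy _
    _ = M * ∏ i ∈ s, (a i + b i) := by
        rw [mul_pow, ← NNReal.rpow_natCast (M ^ r), ← NNReal.rpow_natCast ((∏ i ∈ s, (a i + b i)) ^ r),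
          ← NNReal.rpow_mul, ← NNReal.rpow_mul, inv_mul_cancel₀ hk.ne', NNReal.rpow_one,
          NNReal.rpow_one]

/-- Combinatorial Shearer lemma: if every element of `U` lies in at least `k` of the
sets `A i`, `i ∈ I`, and `F` is a family of subsets of `U`, then
`|F|^k ≤ ∏ |F ∩ A i traces|`. -/
lemma shearer_count {V ι : Type*} [DecidableEq V] [DecidableEq ι] (k : ℕ) (hk : 0 < k)
    (U : Finset V) (I : Finset ι) (A : ι → Finset V)
    (F : Finset (Finset V)) (hF : ∀ S ∈ F, S ⊆ U)
    (hcov : ∀ v ∈ U, k ≤ (I.filter (fun i => v ∈ A i)).card) :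
    F.card ^ k ≤ ∏ i ∈ I, (F.image (· ∩ A i)).card := by
  induction U using Finset.induction_on generalizing F with
  | empty =>
    rcases Finset.subset_singleton_iff.1 (fun S hS => by
        simpa using Finset.subset_empty.1 (hF S hS)) with h | h
    · simp [h, zero_pow hk.ne']
    · subst h
      simp
  | @insert x t hx ih =>
    classical
    set F0 : Finset (Finset V) := F.filter (fun S => x ∉ S) with hF0def
    set F1 : Finset (Finset V) := (F.filter (fun S => x ∈ S)).image (fun S => S.erase x) with hF1def
    -- every member of F0 and F1 avoids x
    have hF0x : ∀ S ∈ F0, x ∉ S := fun S hS => (Finset.mem_filter.1 hS).2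
    have hF1x : ∀ S ∈ F1, x ∉ S := by
      intro S hS
      obtain ⟨T, _, rfl⟩ := Finset.mem_image.1 hS
      exact Finset.notMem_erase x T
    have hF0sub : ∀ S ∈ F0, S ⊆ t := by
      intro S hS v hv
      rcases Finset.mem_insert.1 (hF S (Finset.mem_filter.1 hS).1 hv) with h | h
      · exact absurd (h ▸ hv) (hF0x S hS)
      · exact h
    have hF1sub : ∀ S ∈ F1, S ⊆ t := by
      intro S hS v hv
      obtain ⟨T, hT, rfl⟩ := Finset.mem_image.1 hS
      rcases Finset.mem_insert.1 (hF T (Finset.mem_filter.1 hT).1 (Finset.erase_subset x T hv))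
        with h | h
      · exact absurd h (by rintro rfl; exact Finset.notMem_erase v T hv)
      · exact h
    have hcov' : ∀ v ∈ t, k ≤ (I.filter (fun i => v ∈ A i)).card := fun v hv =>
      hcov v (Finset.mem_insert_of_mem hv)
    -- cardinality split
    have hcard : F.card = F0.card + F1.card := by
      have h1 : F1.card = (F.filter (fun S => x ∈ S)).card := by
        apply Finset.card_image_of_injOn
        intro S hS T hT h
        have h' : S.erase x = T.erase x := h
        rw [← Finset.insert_erase (Finset.mem_filter.1 hS).2, h',
          Finset.insert_erase (Finset.mem_filter.1 hT).2]
      rw [h1, hF0def, add_comm, Finset.card_filter_add_card_filter_not]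
    -- the traces of F0, F1, F
    set a : ι → ℝ≥0 := fun i => ((F0.image (· ∩ A i)).card : ℝ≥0) with ha
    set b : ι → ℝ≥0 := fun i => ((F1.image (· ∩ A i)).card : ℝ≥0) with hb
    set c : ι → ℝ≥0 := fun i => ((F.image (· ∩ A i)).card : ℝ≥0) with hc
    have hac : ∀ i, a i ≤ c i := by
      intro i
      simp only [ha, hc]
      exact_mod_cast Finset.card_le_card
        (Finset.image_subset_image (Finset.filter_subset _ _))
    have hbc : ∀ i, b i ≤ c i := by
      intro i
      by_cases hxi : x ∈ A i
      · -- map T ↦ insert x T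
        have : (F1.image (· ∩ A i)).card ≤ (F.image (· ∩ A i)).card := by
          apply Finset.card_le_card_of_injOn (fun T => insert x T)
          · intro T hT
            obtain ⟨S, hS, rfl⟩ := Finset.mem_image.1 hT
            obtain ⟨S', hS', rfl⟩ := Finset.mem_image.1 hS
            refine Finset.mem_image.2 ⟨S', (Finset.mem_filter.1 hS').1, ?_⟩
            beta_reduce
            rw [← Finset.insert_inter_of_mem hxi, Finset.insert_erase (Finset.mem_filter.1 hS').2]
          · intro T hT T' hT' h
            have hxT : x ∉ T := by
              obtain ⟨S, hS, rfl⟩ := Finset.mem_image.1 hT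
              exact fun hc' => hF1x S hS (Finset.mem_inter.1 hc').1
            have hxT' : x ∉ T' := by
              obtain ⟨S, hS, rfl⟩ := Finset.mem_image.1 hT'
              exact fun hc' => hF1x S hS (Finset.mem_inter.1 hc').1
            have h' : insert x T = insert x T' := h
            rw [← Finset.erase_insert hxT, h', Finset.erase_insert hxT']
        simp only [hb, hc]
        exact_mod_cast this
      · -- traces agree
        have : F1.image (· ∩ A i) ⊆ F.image (· ∩ A i) := by
          intro T hT
          obtain ⟨S, hS, rfl⟩ := Finset.mem_image.1 hT
          obtain ⟨S', hS', rfl⟩ := Finset.mem_image.1 hS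
          refine Finset.mem_image.2 ⟨S', (Finset.mem_filter.1 hS').1, ?_⟩
          rw [Finset.erase_inter, Finset.erase_eq_of_notMem]
          exact fun hc' => hxi (Finset.mem_inter.1 hc').2
        simp only [hb, hc]
        exact_mod_cast Finset.card_le_card this
    have habc : ∀ i, x ∈ A i → a i + b i ≤ c i := by
      intro i hxi
      set P := F0.image (· ∩ A i) with hP
      set Q := (F1.image (· ∩ A i)).image (fun T => insert x T) with hQ
      have hxnotmem : ∀ T ∈ F1.image (· ∩ A i), x ∉ T := by
        intro T hT
        obtain ⟨S, hS, rfl⟩ := Finset.mem_image.1 hT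
        exact fun hc' => hF1x S hS (Finset.mem_inter.1 hc').1
      have hQcard : Q.card = (F1.image (· ∩ A i)).card := by
        apply Finset.card_image_of_injOn
        intro T hT T' hT' h
        have h' : insert x T = insert x T' := h
        rw [← Finset.erase_insert (hxnotmem T hT), h', Finset.erase_insert (hxnotmem T' hT')]
      have hdisj : Disjoint P Q := by
        rw [Finset.disjoint_left]
        intro T hTP hTQ
        obtain ⟨S, hS, rfl⟩ := Finset.mem_image.1 hTP
        obtain ⟨T', _, hT'eq⟩ := Finset.mem_image.1 hTQ
        exact hF0x S hS (Finset.mem_inter.1 (hT'eq ▸ Finset.mem_insert_self x T' :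
          x ∈ S ∩ A i)).1
      have hsub : P ∪ Q ⊆ F.image (· ∩ A i) := by
        intro T hT
        rcases Finset.mem_union.1 hT with h | h
        · obtain ⟨S, hS, rfl⟩ := Finset.mem_image.1 h
          exact Finset.mem_image.2 ⟨S, (Finset.mem_filter.1 hS).1, rfl⟩
        · obtain ⟨T', hT', rfl⟩ := Finset.mem_image.1 h
          obtain ⟨S, hS, rfl⟩ := Finset.mem_image.1 hT'
          obtain ⟨S', hS', rfl⟩ := Finset.mem_image.1 hS
          refine Finset.mem_image.2 ⟨S', (Finset.mem_filter.1 hS').1, ?_⟩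
          rw [← Finset.insert_inter_of_mem hxi, Finset.insert_erase (Finset.mem_filter.1 hS').2]
      have : (F0.image (· ∩ A i)).card + (F1.image (· ∩ A i)).card ≤ (F.image (· ∩ A i)).card := by
        rw [← hQcard, ← Finset.card_union_of_disjoint hdisj]
        exact Finset.card_le_card hsub
      simp only [ha, hb, hc]
      exact_mod_cast this
    -- choose k indices whose sets contain x
    have hIxk : k ≤ (I.filter (fun i => x ∈ A i)).card := hcov x (Finset.mem_insert_self x t)
    obtain ⟨I', hI'sub, hI'card⟩ := Finset.exists_subset_card_eq hIxk
    have hI'I : I' ⊆ I := hI'sub.trans (Finset.filter_subset _ _)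
    have hI'ne : I'.Nonempty := Finset.card_pos.1 (hI'card ▸ hk)
    set M : ℝ≥0 := ∏ i ∈ I \ I', c i with hM
    have hprods : ∀ f : ι → ℝ≥0, (∏ i ∈ I \ I', f i) * ∏ i ∈ I', f i = ∏ i ∈ I, f i :=
      fun f => Finset.prod_sdiff hI'I
    have hIHa : ((F0.card : ℝ≥0)) ^ k ≤ M * ∏ i ∈ I', a i := by
      calc ((F0.card : ℝ≥0)) ^ k ≤ ∏ i ∈ I, a i := by
            simp only [ha]
            exact_mod_cast ih F0 hF0sub hcov'
        _ = (∏ i ∈ I \ I', a i) * ∏ i ∈ I', a i := (hprods a).symm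
        _ ≤ M * ∏ i ∈ I', a i :=
            mul_le_mul_left (Finset.prod_le_prod' fun i _ => hac i) _
    have hIHb : ((F1.card : ℝ≥0)) ^ k ≤ M * ∏ i ∈ I', b i := by
      calc ((F1.card : ℝ≥0)) ^ k ≤ ∏ i ∈ I, b i := by
            simp only [hb]
            exact_mod_cast ih F1 hF1sub hcov'
        _ = (∏ i ∈ I \ I', b i) * ∏ i ∈ I', b i := (hprods b).symm
        _ ≤ M * ∏ i ∈ I', b i :=
            mul_le_mul_left (Finset.prod_le_prod' fun i _ => hbc i) _
    have hkey := combine_pow I' hI'ne a b M (F0.card) (F1.card)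
      (by rw [hI'card]; exact hIHa) (by rw [hI'card]; exact hIHb)
    rw [hI'card] at hkey
    have hfinal : ((F.card : ℝ≥0)) ^ k ≤ ∏ i ∈ I, c i := by
      calc ((F.card : ℝ≥0)) ^ k = ((F0.card : ℝ≥0) + (F1.card : ℝ≥0)) ^ k := by
            rw [hcard]; push_cast; ring
        _ ≤ M * ∏ i ∈ I', (a i + b i) := hkey
        _ ≤ M * ∏ i ∈ I', c i := by
            refine mul_le_mul_right (Finset.prod_le_prod' fun i hi => ?_) _
            exact habc i (Finset.mem_filter.1 (hI'sub hi)).2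
        _ = ∏ i ∈ I, c i := hprods c
    simp only [hc] at hfinal
    exact_mod_cast hfinal

/-- The number of dominating vertex subsets of `G`. -/
noncomputable def numDomSets {V : Type*} (G : SimpleGraph V) : ℕ :=
  Nat.card {s : Finset V // ∀ v, v ∈ s ∨ ∃ u ∈ s, G.Adj u v}

lemma upper_bound (d n : ℕ) (hdvd : (d + 1) ∣ n) (V : Type) [Fintype V] (G : SimpleGraph V)
    [DecidableRel G.Adj] (hcard : Fintype.card V = n) (hreg : G.IsRegularOfDegree d) :
    numDomSets G ≤ (2 ^ (d + 1) - 1) ^ (n / (d + 1)) := by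
  classical
  set F : Finset (Finset V) :=
    Finset.univ.filter (fun s : Finset V => ∀ v, v ∈ s ∨ ∃ u ∈ s, G.Adj u v) with hFdef
  have hnum : numDomSets G = F.card := by
    rw [numDomSets, Nat.card_eq_fintype_card, Fintype.card_subtype]
  set A : V → Finset V := fun v => insert v (G.neighborFinset v) with hA
  have hAcard : ∀ v, (A v).card = d + 1 := by
    intro v
    rw [hA]
    rw [Finset.card_insert_of_notMem (by simp), G.card_neighborFinset_eq_degree, hreg v]
  have hmemA : ∀ u v : V, u ∈ A v ↔ v ∈ A u := by
    intro u v
    simp only [hA, Finset.mem_insert, mem_neighborFinset]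
    rw [G.adj_comm, eq_comm]
  have hcov : ∀ v ∈ (Finset.univ : Finset V),
      d + 1 ≤ ((Finset.univ : Finset V).filter (fun i => v ∈ A i)).card := by
    intro v _
    have : (Finset.univ : Finset V).filter (fun i => v ∈ A i) = A v := by
      ext u
      simp only [Finset.mem_filter, Finset.mem_univ, true_and]
      exact hmemA v u
    rw [this, hAcard]
  have hshearer := shearer_count (d + 1) (Nat.succ_pos d) Finset.univ Finset.univ A F
    (fun S _ => S.subset_univ) hcov
  have htrace : ∀ v : V, (F.image (· ∩ A v)).card ≤ 2 ^ (d + 1) - 1 := by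
    intro v
    have hsub : F.image (· ∩ A v) ⊆ (A v).powerset.erase ∅ := by
      intro T hT
      obtain ⟨s, hs, rfl⟩ := Finset.mem_image.1 hT
      have hdom := (Finset.mem_filter.1 hs).2
      refine Finset.mem_erase.2 ⟨?_, Finset.mem_powerset.2 (Finset.inter_subset_right)⟩
      rcases hdom v with h | ⟨u, hu, hadj⟩
      · exact Finset.ne_empty_of_mem (Finset.mem_inter.2 ⟨h, Finset.mem_insert_self v _⟩)
      · refine Finset.ne_empty_of_mem (Finset.mem_inter.2 ⟨hu, ?_⟩)
        exact Finset.mem_insert_of_mem ((mem_neighborFinset G v u).2 hadj.symm)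
    calc (F.image (· ∩ A v)).card ≤ ((A v).powerset.erase ∅).card := Finset.card_le_card hsub
      _ = 2 ^ (d + 1) - 1 := by
        rw [Finset.card_erase_of_mem (Finset.empty_mem_powerset _), Finset.card_powerset,
          hAcard]
  have hfinal : F.card ^ (d + 1) ≤ ((2 ^ (d + 1) - 1) ^ (n / (d + 1))) ^ (d + 1) := by
    calc F.card ^ (d + 1) ≤ ∏ v : V, (F.image (· ∩ A v)).card := hshearer
      _ ≤ ∏ _v : V, (2 ^ (d + 1) - 1) := Finset.prod_le_prod' (fun v _ => htrace v)
      _ = (2 ^ (d + 1) - 1) ^ n := by rw [Finset.prod_const, Finset.card_univ, hcard]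
      _ = ((2 ^ (d + 1) - 1) ^ (n / (d + 1))) ^ (d + 1) := by
        rw [← pow_mul, Nat.div_mul_cancel hdvd]
  rw [hnum]
  exact (Nat.pow_le_pow_iff_left (Nat.succ_ne_zero d)).1 hfinal

lemma clique_count (m K : ℕ) (hK : 0 < K) :
    numDomSets (fromRel (fun a b : Fin m × Fin K => a.1 = b.1)) = (2 ^ K - 1) ^ m := by
  classical
  set H := fromRel (fun a b : Fin m × Fin K => a.1 = b.1) with hH
  have hdom : ∀ s : Finset (Fin m × Fin K),
      (∀ v, v ∈ s ∨ ∃ u ∈ s, H.Adj u v) ↔ ∀ i : Fin m, ∃ u ∈ s, u.1 = i := by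
    intro s
    constructor
    · intro h i
      obtain ⟨j⟩ : Nonempty (Fin K) := ⟨⟨0, hK⟩⟩
      rcases h (i, j) with hv | ⟨u, hu, hadj⟩
      · exact ⟨(i, j), hv, rfl⟩
      · rw [hH, fromRel_adj] at hadj
        rcases hadj.2 with h1 | h1
        · exact ⟨u, hu, h1⟩
        · exact ⟨u, hu, h1.symm⟩
    · intro h v
      obtain ⟨u, hu, hu1⟩ := h v.1
      by_cases huv : u = v
      · exact Or.inl (huv ▸ hu)
      · refine Or.inr ⟨u, hu, ?_⟩
        rw [hH, fromRel_adj]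
        exact ⟨huv, Or.inl hu1⟩
  have e1 : {s : Finset (Fin m × Fin K) // ∀ v, v ∈ s ∨ ∃ u ∈ s, H.Adj u v}
      ≃ {s : Finset (Fin m × Fin K) // ∀ i : Fin m, ∃ u ∈ s, u.1 = i} :=
    Equiv.subtypeEquivRight hdom
  have e2 : {s : Finset (Fin m × Fin K) // ∀ i : Fin m, ∃ u ∈ s, u.1 = i}
      ≃ (Fin m → {t : Finset (Fin K) // t.Nonempty}) := by
    refine
      { toFun := fun s i => ⟨Finset.univ.filter (fun j => (i, j) ∈ s.1), ?_⟩
        invFun := fun f => ⟨Finset.univ.filter (fun p => p.2 ∈ (f p.1).1), ?_⟩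
        left_inv := ?_
        right_inv := ?_ }
    · obtain ⟨u, hu, hu1⟩ := s.2 i
      exact ⟨u.2, Finset.mem_filter.2 ⟨Finset.mem_univ _, by rwa [← hu1, Prod.mk.eta]⟩⟩
    · intro i
      obtain ⟨j, hj⟩ := (f i).2
      exact ⟨(i, j), Finset.mem_filter.2 ⟨Finset.mem_univ _, hj⟩, rfl⟩
    · rintro ⟨s, hs⟩
      ext p
      simp [Prod.mk.eta]
    · intro f
      funext i
      ext j
      simp
  have e3 : Fintype.card {t : Finset (Fin K) // t.Nonempty} = 2 ^ K - 1 := by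
    have : Fintype.card {t : Finset (Fin K) // t.Nonempty}
        = Fintype.card {t : Finset (Fin K) // ¬ t = ∅} := by
      apply Fintype.card_congr
      exact Equiv.subtypeEquivRight (fun t => by rw [Finset.nonempty_iff_ne_empty])
    rw [this, Fintype.card_subtype_compl, Fintype.card_subtype_eq (∅ : Finset (Fin K)),
      Fintype.card_finset, Fintype.card_fin]
  rw [numDomSets, Nat.card_congr (e1.trans e2), Nat.card_pi]
  simp [Nat.card_eq_fintype_card, e3]

theorem stmt15 (d n : ℕ) (hdvd : (d + 1) ∣ n) :
    (∀ (V : Type) [Fintype V] (G : SimpleGraph V) [DecidableRel G.Adj],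
      Fintype.card V = n → G.IsRegularOfDegree d →
      numDomSets G ≤ (2 ^ (d + 1) - 1) ^ (n / (d + 1))) ∧
    numDomSets (fromRel (fun a b : Fin (n / (d + 1)) × Fin (d + 1) => a.1 = b.1)) =
      (2 ^ (d + 1) - 1) ^ (n / (d + 1)) := by
  constructor
  · intro V _ G _ hcard hreg
    exact upper_bound d n hdvd V G hcard hreg
  · exact clique_count (n / (d + 1)) (d + 1) (Nat.succ_pos d)
end
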